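/- arXiv:2506.22779 — 4 statements merged into one kernel-verified Lean document; each statement's English description precedes it below -/
import Mathlib

section
/- There exists a constant C ≥ 0 such that for all β₁, β₂ ∈ [0,2] and all measurable functions f₁, f₂ : [0,1] → [1,2], one has ‖u(·; β₁, f₁) − u(·; β₂, f₂)‖_{L²} ≤ C (|β₁ − β₂| + ‖f₁ − f₂‖_{L²}). (This is the Lipschitz condition of Assumption 3(a) with r = 0 for the SemiPDE model of Example 3.) -/
open MeasureTheory Set

/-- The solution component `v(x; β, f) = ∫_0^x e^{β(x−s)} e^s f(s) ds`. -/
noncomputable def v (β : ℝ) (f : ℝ → ℝ) (x : ℝ) : ℝ :=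
  ∫ s in (0:ℝ)..x, Real.exp (β * (x - s)) * Real.exp s * f s

/-- The solution `u(x; β, f) = (v(x; β, f), v(x; 2β, f))` of the SemiPDE model of Example 3. -/
noncomputable def u (β : ℝ) (f : ℝ → ℝ) (x : ℝ) : ℝ × ℝ :=
  (v β f x, v (2 * β) f x)

/-- L² norm on [0,1] of a real-valued function. -/
noncomputable def L2 (w : ℝ → ℝ) : ℝ :=
  Real.sqrt (∫ x in (0:ℝ)..1, (w x) ^ 2)

/-- L² norm on [0,1] of an ℝ²-valued function (Euclidean norm on ℝ²). -/
noncomputable def L2v (w : ℝ → ℝ × ℝ) : ℝ :=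
  Real.sqrt (∫ x in (0:ℝ)..1, ((w x).1 ^ 2 + (w x).2 ^ 2))

lemma exp_lip {a b : ℝ} (ha : a ≤ 4) (hb : b ≤ 4) :
    |Real.exp a - Real.exp b| ≤ Real.exp 4 * |a - b| := by
  wlog h : b ≤ a generalizing a b
  · rw [abs_sub_comm, abs_sub_comm a b]; exact this hb ha (le_of_not_ge h)
  rw [abs_of_nonneg (sub_nonneg.2 (Real.exp_le_exp.2 h)), abs_of_nonneg (sub_nonneg.2 h)]
  have key : Real.exp a * Real.exp (b - a) = Real.exp b := by
    rw [← Real.exp_add]; ring_nf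
  have h1 : Real.exp a ≤ Real.exp 4 := Real.exp_le_exp.2 ha
  have h2 := Real.add_one_le_exp (b - a)
  nlinarith [Real.exp_pos a, Real.exp_pos (b - a)]

lemma intInt {g : ℝ → ℝ} (hm : Measurable g) {M : ℝ}
    (hb : ∀ s ∈ Icc (0:ℝ) 1, |g s| ≤ M) {x y : ℝ} (hx : x ∈ Icc (0:ℝ) 1)
    (hy : y ∈ Icc (0:ℝ) 1) : IntervalIntegrable g volume x y := by
  have h1 : IntegrableOn g (Icc (0:ℝ) 1) volume := by
    apply Measure.integrableOn_of_bounded (M := M)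
    · rw [Real.volume_Icc]; exact ENNReal.ofReal_ne_top
    · exact hm.aestronglyMeasurable
    · refine (ae_restrict_iff' measurableSet_Icc).2 (ae_of_all _ ?_)
      intro s hs; simpa using hb s hs
  rw [intervalIntegrable_iff]
  exact h1.mono ((Ioc_subset_Icc_self).trans (uIcc_subset_Icc hx hy)) le_rfl

lemma v_diff {β₁ β₂ : ℝ} (hβ₁ : β₁ ∈ Icc (0:ℝ) 4) (hβ₂ : β₂ ∈ Icc (0:ℝ) 4)
    {f₁ f₂ : ℝ → ℝ} (hm₁ : Measurable f₁) (hm₂ : Measurable f₂)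
    (hb₁ : ∀ s ∈ Icc (0:ℝ) 1, f₁ s ∈ Icc (1:ℝ) 2)
    (hb₂ : ∀ s ∈ Icc (0:ℝ) 1, f₂ s ∈ Icc (1:ℝ) 2)
    {x : ℝ} (hx : x ∈ Icc (0:ℝ) 1) :
    |v β₁ f₁ x - v β₂ f₂ x| ≤
      2 * Real.exp 5 * |β₁ - β₂| + Real.exp 5 * ∫ s in (0:ℝ)..1, |f₁ s - f₂ s| := by
  obtain ⟨hx0, hx1⟩ := hx
  set h₁ : ℝ → ℝ := fun s => Real.exp (β₁ * (x - s)) * Real.exp s * f₁ s with hh₁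
  set h₂ : ℝ → ℝ := fun s => Real.exp (β₂ * (x - s)) * Real.exp s * f₂ s with hh₂
  set G : ℝ → ℝ := fun s =>
    2 * Real.exp 5 * |β₁ - β₂| + Real.exp 5 * |f₁ s - f₂ s| with hG
  -- bounds on h₁, h₂
  have hbd : ∀ (β : ℝ), β ∈ Icc (0:ℝ) 4 → ∀ (f : ℝ → ℝ),
      (∀ s ∈ Icc (0:ℝ) 1, f s ∈ Icc (1:ℝ) 2) → ∀ s ∈ Icc (0:ℝ) 1,
      |Real.exp (β * (x - s)) * Real.exp s * f s| ≤ 2 * Real.exp 5 := by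
    intro β hβ f hf s hs
    have h1 : Real.exp (β * (x - s)) ≤ Real.exp 4 :=
      Real.exp_le_exp.2 (by nlinarith [hβ.1, hβ.2, hs.1, hs.2, hx0, hx1])
    have h2 : Real.exp s ≤ Real.exp 1 := Real.exp_le_exp.2 hs.2
    have h3 := hf s hs
    have e5 : Real.exp 4 * Real.exp 1 = Real.exp 5 := by
      rw [← Real.exp_add]; norm_num
    rw [abs_mul, abs_mul, abs_of_nonneg (Real.exp_pos _).le,
      abs_of_nonneg (Real.exp_pos _).le]
    have hfa : |f s| ≤ 2 := abs_le.2 ⟨by linarith [h3.1], h3.2⟩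
    calc Real.exp (β * (x - s)) * Real.exp s * |f s|
        ≤ (Real.exp 4 * Real.exp 1) * 2 := by
          apply mul_le_mul (mul_le_mul h1 h2 (Real.exp_pos _).le (Real.exp_pos _).le) hfa
            (abs_nonneg _) (by positivity)
      _ = 2 * Real.exp 5 := by rw [e5]; ring
  have hmh₁ : Measurable h₁ := by fun_prop
  have hmh₂ : Measurable h₂ := by fun_prop
  have hmG : Measurable G := by fun_prop
  have hi₁ : IntervalIntegrable h₁ volume 0 x :=
    intInt hmh₁ (hbd β₁ hβ₁ f₁ hb₁) ⟨le_refl 0, by norm_num⟩ ⟨hx0, hx1⟩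
  have hi₂ : IntervalIntegrable h₂ volume 0 x :=
    intInt hmh₂ (hbd β₂ hβ₂ f₂ hb₂) ⟨le_refl 0, by norm_num⟩ ⟨hx0, hx1⟩
  have hGnn : ∀ s, 0 ≤ G s := by
    intro s
    have := abs_nonneg (β₁ - β₂); have := abs_nonneg (f₁ s - f₂ s)
    have := (Real.exp_pos (5:ℝ)).le
    simp only [hG]; positivity
  have hGbd : ∀ s ∈ Icc (0:ℝ) 1, |G s| ≤ 2 * Real.exp 5 * |β₁ - β₂| + Real.exp 5 := by
    intro s hs
    have hdf : |f₁ s - f₂ s| ≤ 1 := by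
      have h1 := hb₁ s hs; have h2 := hb₂ s hs
      rw [abs_le]; constructor <;> [linarith [h1.1, h2.2]; linarith [h1.2, h2.1]]
    rw [abs_of_nonneg (hGnn s)]
    have := (Real.exp_pos (5:ℝ)).le
    simp only [hG]
    nlinarith [abs_nonneg (β₁ - β₂)]
  have hiG0x : IntervalIntegrable G volume 0 x :=
    intInt hmG hGbd ⟨le_refl 0, by norm_num⟩ ⟨hx0, hx1⟩
  have hiGx1 : IntervalIntegrable G volume x 1 :=
    intInt hmG hGbd ⟨hx0, hx1⟩ ⟨by norm_num, le_refl 1⟩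
  have hidf : IntervalIntegrable (fun s => |f₁ s - f₂ s|) volume 0 1 := by
    apply intInt (by fun_prop) (M := 1)
    · intro s hs
      have h1 := hb₁ s hs; have h2 := hb₂ s hs
      rw [abs_abs, abs_le]; constructor <;> [linarith [h1.1, h2.2]; linarith [h1.2, h2.1]]
    · exact ⟨le_refl 0, by norm_num⟩
    · exact ⟨by norm_num, le_refl 1⟩
  -- pointwise bound on Ι 0 x
  have hpt : ∀ t ∈ Set.uIoc (0:ℝ) x, ‖h₁ t - h₂ t‖ ≤ G t := by
    intro t ht
    rw [uIoc_of_le hx0] at ht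
    obtain ⟨ht0, htx⟩ := ht
    have hxt0 : 0 ≤ x - t := by linarith
    have hxt1 : x - t ≤ 1 := by linarith
    have ha4 : β₁ * (x - t) ≤ 4 := by nlinarith [hβ₁.1, hβ₁.2]
    have hb4 : β₂ * (x - t) ≤ 4 := by nlinarith [hβ₂.1, hβ₂.2]
    have hlip := exp_lip ha4 hb4
    have hab : |β₁ * (x - t) - β₂ * (x - t)| ≤ |β₁ - β₂| := by
      rw [show β₁ * (x - t) - β₂ * (x - t) = (β₁ - β₂) * (x - t) by ring, abs_mul,
        abs_of_nonneg hxt0]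
      nlinarith [abs_nonneg (β₁ - β₂)]
    have hexpb : Real.exp (β₂ * (x - t)) ≤ Real.exp 4 := Real.exp_le_exp.2 hb4
    have hexpt : Real.exp t ≤ Real.exp 1 := Real.exp_le_exp.2 (by linarith)
    have hf1 : |f₁ t| ≤ 2 := by
      have h1 := hb₁ t ⟨ht0.le, by linarith⟩
      rw [abs_le]; exact ⟨by linarith [h1.1], h1.2⟩
    have e5 : Real.exp 1 * Real.exp 4 = Real.exp 5 := by rw [← Real.exp_add]; norm_num
    have split : h₁ t - h₂ t =
        Real.exp t * ((Real.exp (β₁ * (x - t)) - Real.exp (β₂ * (x - t))) * f₁ t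
          + Real.exp (β₂ * (x - t)) * (f₁ t - f₂ t)) := by
      simp only [hh₁, hh₂]; ring
    rw [Real.norm_eq_abs, split, abs_mul, abs_of_nonneg (Real.exp_pos t).le]
    have habs : |(Real.exp (β₁ * (x - t)) - Real.exp (β₂ * (x - t))) * f₁ t
        + Real.exp (β₂ * (x - t)) * (f₁ t - f₂ t)| ≤
        Real.exp 4 * |β₁ - β₂| * 2 + Real.exp 4 * |f₁ t - f₂ t| := by
      refine (abs_add_le _ _).trans ?_
      rw [abs_mul, abs_mul, abs_of_nonneg (Real.exp_pos _).le]
      have t1 : |Real.exp (β₁ * (x - t)) - Real.exp (β₂ * (x - t))| * |f₁ t| ≤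
          Real.exp 4 * |β₁ - β₂| * 2 := by
        have h' : |Real.exp (β₁ * (x - t)) - Real.exp (β₂ * (x - t))| ≤
            Real.exp 4 * |β₁ - β₂| := hlip.trans (by
          nlinarith [Real.exp_pos (4:ℝ), abs_nonneg (β₁ * (x - t) - β₂ * (x - t))])
        calc |Real.exp (β₁ * (x - t)) - Real.exp (β₂ * (x - t))| * |f₁ t|
            ≤ (Real.exp 4 * |β₁ - β₂|) * 2 :=
              mul_le_mul h' hf1 (abs_nonneg _) (by positivity)
          _ = Real.exp 4 * |β₁ - β₂| * 2 := by ring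
      have t2 : Real.exp (β₂ * (x - t)) * |f₁ t - f₂ t| ≤
          Real.exp 4 * |f₁ t - f₂ t| :=
        mul_le_mul_of_nonneg_right hexpb (abs_nonneg _)
      linarith
    calc Real.exp t * |(Real.exp (β₁ * (x - t)) - Real.exp (β₂ * (x - t))) * f₁ t
          + Real.exp (β₂ * (x - t)) * (f₁ t - f₂ t)|
        ≤ Real.exp 1 * (Real.exp 4 * |β₁ - β₂| * 2 + Real.exp 4 * |f₁ t - f₂ t|) :=
          mul_le_mul hexpt habs (abs_nonneg _) (Real.exp_pos 1).le
      _ = G t := by simp only [hG]; rw [← e5]; ring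
  have hveq : v β₁ f₁ x - v β₂ f₂ x = ∫ s in (0:ℝ)..x, (h₁ s - h₂ s) := by
    rw [intervalIntegral.integral_sub hi₁ hi₂]; rfl
  have step1 : |v β₁ f₁ x - v β₂ f₂ x| ≤ |∫ s in (0:ℝ)..x, G s| := by
    rw [hveq, ← Real.norm_eq_abs]
    exact (intervalIntegral.norm_integral_le_of_norm_le hx0
      (ae_of_all _ (fun t ht => hpt t (by rwa [uIoc_of_le hx0]))) hiG0x).trans (le_abs_self _)
  have step2 : |∫ s in (0:ℝ)..x, G s| = ∫ s in (0:ℝ)..x, G s :=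
    abs_of_nonneg (intervalIntegral.integral_nonneg hx0 (fun t _ => hGnn t))
  have step3 : ∫ s in (0:ℝ)..x, G s ≤ ∫ s in (0:ℝ)..1, G s := by
    have := intervalIntegral.integral_add_adjacent_intervals hiG0x hiGx1
    have hx1int : 0 ≤ ∫ s in x..1, G s :=
      intervalIntegral.integral_nonneg hx1 (fun t _ => hGnn t)
    linarith
  have step4 : ∫ s in (0:ℝ)..1, G s =
      2 * Real.exp 5 * |β₁ - β₂| + Real.exp 5 * ∫ s in (0:ℝ)..1, |f₁ s - f₂ s| := by
    simp only [hG]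
    rw [intervalIntegral.integral_add (intervalIntegrable_const) (hidf.const_mul _),
      intervalIntegral.integral_const, intervalIntegral.integral_const_mul]
    simp
  linarith [step1, step2.symm ▸ step1, step3, step4 ▸ step3]

-- ∫_0^1 |g| ≤ sqrt (∫_0^1 g²) for measurable g bounded on [0,1]
lemma CS {g : ℝ → ℝ} (hm : Measurable g) {M : ℝ}
    (hb : ∀ s ∈ Icc (0:ℝ) 1, |g s| ≤ M) :
    ∫ s in (0:ℝ)..1, |g s| ≤ Real.sqrt (∫ s in (0:ℝ)..1, (g s) ^ 2) := by
  set μ := volume.restrict (Ioc (0:ℝ) 1) with hμ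
  have hμuniv : (μ univ).toReal = 1 := by
    rw [hμ, Measure.restrict_apply MeasurableSet.univ, univ_inter, Real.volume_Ioc]
    norm_num
  have habs : Integrable (fun s => |g s|) μ := by
    have := (intInt hm hb (by norm_num : (0:ℝ) ∈ Icc (0:ℝ) 1)
      (by norm_num : (1:ℝ) ∈ Icc (0:ℝ) 1))
    rw [intervalIntegrable_iff_integrableOn_Ioc_of_le (by norm_num : (0:ℝ) ≤ 1)] at this
    exact this.abs
  have hsq : Integrable (fun s => (g s) ^ 2) μ := by
    have := intInt (g := fun s => (g s)^2) (hm.pow_const 2) (M := M^2)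
      (fun s hs => by
        rw [abs_pow]
        calc |g s| ^ 2 ≤ M ^ 2 := by
              have := hb s hs; have h0 : (0:ℝ) ≤ |g s| := abs_nonneg _
              nlinarith)
      (by norm_num : (0:ℝ) ∈ Icc (0:ℝ) 1) (by norm_num : (1:ℝ) ∈ Icc (0:ℝ) 1)
    rw [intervalIntegrable_iff_integrableOn_Ioc_of_le (by norm_num : (0:ℝ) ≤ 1)] at this
    exact this
  set c := ∫ s, |g s| ∂μ with hc
  have hnn : 0 ≤ ∫ s, (|g s| - c) ^ 2 ∂μ := integral_nonneg (fun s => sq_nonneg _)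
  have hexp : ∫ s, (|g s| - c) ^ 2 ∂μ = (∫ s, (g s)^2 ∂μ) - c ^ 2 := by
    have e1 : ∀ s : ℝ, (|g s| - c) ^ 2 = (g s)^2 - (2*c) * |g s| + c^2 := by
      intro s; have := sq_abs (g s); ring_nf; nlinarith [sq_abs (g s)]
    simp_rw [e1]
    have hint1 : Integrable (fun s => (g s)^2 - (2*c) * |g s|) μ :=
      hsq.sub (habs.const_mul (2*c))
    have hint2 : Integrable (fun s => (2*c) * |g s|) μ := habs.const_mul (2*c)
    rw [integral_add hint1 (integrable_const _), integral_sub hsq hint2,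
      MeasureTheory.integral_const_mul, integral_const, smul_eq_mul, measureReal_def, hμuniv]
    ring
  have hkey : c ^ 2 ≤ ∫ s, (g s)^2 ∂μ := by linarith [hnn, hexp.symm ▸ hnn, hexp ▸ hnn]
  have hc0 : 0 ≤ c := integral_nonneg (fun s => abs_nonneg _)
  have h1 : ∫ s in (0:ℝ)..1, |g s| = c := by
    rw [intervalIntegral.integral_of_le (by norm_num : (0:ℝ) ≤ 1)]
  have h2 : ∫ s in (0:ℝ)..1, (g s)^2 = ∫ s, (g s)^2 ∂μ := by
    rw [intervalIntegral.integral_of_le (by norm_num : (0:ℝ) ≤ 1)]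
  rw [h1, h2]
  have hI0 : 0 ≤ ∫ s, (g s)^2 ∂μ := integral_nonneg (fun s => sq_nonneg _)
  exact (Real.le_sqrt hc0 hI0).2 hkey

lemma intOn {g : ℝ → ℝ} (hm : Measurable g) {M : ℝ}
    (hb : ∀ s ∈ Icc (0:ℝ) 1, |g s| ≤ M) : IntegrableOn g (Icc (0:ℝ) 1) volume := by
  apply Measure.integrableOn_of_bounded (M := M)
  · rw [Real.volume_Icc]; exact ENNReal.ofReal_ne_top
  · exact hm.aestronglyMeasurable
  · refine (ae_restrict_iff' measurableSet_Icc).2 (ae_of_all _ ?_)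
    intro s hs; simpa using hb s hs

lemma v_cont {β : ℝ} (hβ : β ∈ Icc (0:ℝ) 4) {f : ℝ → ℝ} (hm : Measurable f)
    (hb : ∀ s ∈ Icc (0:ℝ) 1, f s ∈ Icc (1:ℝ) 2) :
    ContinuousOn (v β f) (Icc (0:ℝ) 1) := by
  set g : ℝ → ℝ := fun s => Real.exp ((1 - β) * s) * f s with hg
  have hgm : Measurable g := by fun_prop
  have hgb : ∀ s ∈ Icc (0:ℝ) 1, |g s| ≤ Real.exp 1 * 2 := by
    intro s hs
    have h1 : Real.exp ((1 - β) * s) ≤ Real.exp 1 :=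
      Real.exp_le_exp.2 (by nlinarith [hβ.1, hβ.2, hs.1, hs.2])
    have h2 := hb s hs
    have hfa : |f s| ≤ 2 := abs_le.2 ⟨by linarith [h2.1], h2.2⟩
    rw [hg, abs_mul, abs_of_nonneg (Real.exp_pos _).le]
    exact mul_le_mul h1 hfa (abs_nonneg _) (Real.exp_pos _).le
  have hint : IntegrableOn g (Icc (0:ℝ) 1) volume := intOn hgm hgb
  have hcp : ContinuousOn (fun x => ∫ t in Ioc (0:ℝ) x, g t) (Icc (0:ℝ) 1) :=
    intervalIntegral.continuousOn_primitive hint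
  have hcexp : ContinuousOn (fun x => Real.exp (β * x)) (Icc (0:ℝ) 1) :=
    (Real.continuous_exp.comp (continuous_const.mul continuous_id)).continuousOn
  refine (hcexp.mul hcp).congr ?_
  intro x hx
  show v β f x = Real.exp (β * x) * ∫ t in Ioc (0:ℝ) x, g t
  unfold v
  rw [intervalIntegral.integral_congr
      (g := fun s => Real.exp (β * x) * g s) (fun s _ => by
        show Real.exp (β * (x - s)) * Real.exp s * f s = Real.exp (β * x) * g s
        have harg : β * (x - s) + s = β * x + (1 - β) * s := by ring
        rw [hg, ← Real.exp_add, ← mul_assoc, ← Real.exp_add, harg]),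
    intervalIntegral.integral_const_mul, intervalIntegral.integral_of_le hx.1]

/-- Lipschitz condition of Assumption 3(a) with r = 0 for the SemiPDE model of Example 3. -/
theorem lipschitz_condition_r_zero :
    ∃ C : ℝ, 0 ≤ C ∧
      ∀ β₁ ∈ Set.Icc (0:ℝ) 2, ∀ β₂ ∈ Set.Icc (0:ℝ) 2,
        ∀ f₁ f₂ : ℝ → ℝ, Measurable f₁ → Measurable f₂ →
          (∀ s ∈ Set.Icc (0:ℝ) 1, f₁ s ∈ Set.Icc (1:ℝ) 2) →
          (∀ s ∈ Set.Icc (0:ℝ) 1, f₂ s ∈ Set.Icc (1:ℝ) 2) →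
          L2v (fun x => u β₁ f₁ x - u β₂ f₂ x) ≤
            C * (|β₁ - β₂| + L2 (fun x => f₁ x - f₂ x)) := by
  refine ⟨8 * Real.exp 5, by positivity, ?_⟩
  intro β₁ hβ₁ β₂ hβ₂ f₁ f₂ hm₁ hm₂ hb₁ hb₂
  set I := ∫ s in (0:ℝ)..1, |f₁ s - f₂ s| with hI
  set L := L2 (fun x => f₁ x - f₂ x) with hL
  have hdfm : Measurable (fun s => f₁ s - f₂ s) := hm₁.sub hm₂
  have hdfb : ∀ s ∈ Icc (0:ℝ) 1, |f₁ s - f₂ s| ≤ 1 := by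
    intro s hs
    have h1 := hb₁ s hs; have h2 := hb₂ s hs
    rw [abs_le]; constructor <;> [linarith [h1.1, h2.2]; linarith [h1.2, h2.1]]
  have hIL : I ≤ L := CS hdfm hdfb
  have hL0 : 0 ≤ L := Real.sqrt_nonneg _
  have hI0 : 0 ≤ I :=
    intervalIntegral.integral_nonneg (by norm_num) (fun s _ => abs_nonneg _)
  set M : ℝ := 4 * Real.exp 5 * (|β₁ - β₂| + L) with hM
  have hM0 : 0 ≤ M := by positivity
  have hβ₁' : β₁ ∈ Icc (0:ℝ) 4 := ⟨hβ₁.1, by linarith [hβ₁.2]⟩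
  have hβ₂' : β₂ ∈ Icc (0:ℝ) 4 := ⟨hβ₂.1, by linarith [hβ₂.2]⟩
  have h2β₁ : 2 * β₁ ∈ Icc (0:ℝ) 4 := ⟨by linarith [hβ₁.1], by linarith [hβ₁.2]⟩
  have h2β₂ : 2 * β₂ ∈ Icc (0:ℝ) 4 := ⟨by linarith [hβ₂.1], by linarith [hβ₂.2]⟩
  -- pointwise bounds
  have key : ∀ x ∈ Icc (0:ℝ) 1,
      ((fun x => u β₁ f₁ x - u β₂ f₂ x) x).1 ^ 2 +
        ((fun x => u β₁ f₁ x - u β₂ f₂ x) x).2 ^ 2 ≤ 2 * M ^ 2 := by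
    intro x hx
    have k1 : |v β₁ f₁ x - v β₂ f₂ x| ≤ M := by
      have := v_diff hβ₁' hβ₂' hm₁ hm₂ hb₁ hb₂ hx
      rw [hM]
      nlinarith [Real.exp_pos (5:ℝ), abs_nonneg (β₁ - β₂)]
    have k2 : |v (2 * β₁) f₁ x - v (2 * β₂) f₂ x| ≤ M := by
      have := v_diff h2β₁ h2β₂ hm₁ hm₂ hb₁ hb₂ hx
      have habs : |2 * β₁ - 2 * β₂| = 2 * |β₁ - β₂| := by
        rw [show 2 * β₁ - 2 * β₂ = 2 * (β₁ - β₂) by ring, abs_mul]; norm_num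
      rw [hM]
      nlinarith [Real.exp_pos (5:ℝ), abs_nonneg (β₁ - β₂)]
    have s1 : (v β₁ f₁ x - v β₂ f₂ x) ^ 2 ≤ M ^ 2 := by
      rw [← sq_abs]; exact pow_le_pow_left₀ (abs_nonneg _) k1 2
    have s2 : (v (2 * β₁) f₁ x - v (2 * β₂) f₂ x) ^ 2 ≤ M ^ 2 := by
      rw [← sq_abs]; exact pow_le_pow_left₀ (abs_nonneg _) k2 2
    simp only [u, Prod.fst_sub, Prod.snd_sub]
    linarith
  -- integrability of LHS integrand
  have hcont : ContinuousOn (fun x =>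
      ((fun x => u β₁ f₁ x - u β₂ f₂ x) x).1 ^ 2 +
        ((fun x => u β₁ f₁ x - u β₂ f₂ x) x).2 ^ 2) (Icc (0:ℝ) 1) := by
    have c1 := v_cont hβ₁' hm₁ hb₁
    have c2 := v_cont hβ₂' hm₂ hb₂
    have c3 := v_cont h2β₁ hm₁ hb₁
    have c4 := v_cont h2β₂ hm₂ hb₂
    simp only [u, Prod.fst_sub, Prod.snd_sub]
    exact (((c1.sub c2).pow 2).add ((c3.sub c4).pow 2))
  have hii : IntervalIntegrable (fun x =>
      ((fun x => u β₁ f₁ x - u β₂ f₂ x) x).1 ^ 2 +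
        ((fun x => u β₁ f₁ x - u β₂ f₂ x) x).2 ^ 2) volume 0 1 := by
    apply ContinuousOn.intervalIntegrable
    rwa [uIcc_of_le (by norm_num : (0:ℝ) ≤ 1)]
  have hmono : ∫ x in (0:ℝ)..1,
      (((fun x => u β₁ f₁ x - u β₂ f₂ x) x).1 ^ 2 +
        ((fun x => u β₁ f₁ x - u β₂ f₂ x) x).2 ^ 2) ≤
      ∫ _x in (0:ℝ)..1, 2 * M ^ 2 :=
    intervalIntegral.integral_mono_on (by norm_num) hii intervalIntegrable_const key
  have hconst : ∫ _x in (0:ℝ)..1, 2 * M ^ 2 = 2 * M ^ 2 := by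
    rw [intervalIntegral.integral_const]; simp
  rw [L2v]
  calc Real.sqrt (∫ x in (0:ℝ)..1,
        (((fun x => u β₁ f₁ x - u β₂ f₂ x) x).1 ^ 2 +
          ((fun x => u β₁ f₁ x - u β₂ f₂ x) x).2 ^ 2))
      ≤ Real.sqrt (2 * M ^ 2) := Real.sqrt_le_sqrt (by rw [← hconst]; exact hmono)
    _ ≤ Real.sqrt ((2 * M) ^ 2) := Real.sqrt_le_sqrt (by nlinarith)
    _ = 2 * M := Real.sqrt_sq (by positivity)
    _ = 8 * Real.exp 5 * (|β₁ - β₂| + L) := by rw [hM]; ring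
end

section
/- There exists a constant C ≥ 0 such that for all β₁, β₂ ∈ [0,2] and all measurable functions f₁, f₂ : [0,1] → [1,2], one has ‖u(·; β₁, f₁) − u(·; β₂, f₂)‖_{L²} ≤ C (|β₁ − β₂| + ‖Γ(f₁ − f₂)‖_{L²}). (This is the Lipschitz condition (7) of Assumption 3(a) with r = 1 for the SemiPDE model of Example 3.) -/
open MeasureTheory Set

/-- The first-order integral (Volterra) operator `(Γg)(x) = ∫_0^x g(s) ds`. -/
noncomputable def Γ (g : ℝ → ℝ) (x : ℝ) : ℝ :=
  ∫ s in (0:ℝ)..x, g s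

lemma integrableOn_of_bound {f : ℝ → ℝ} (hf : Measurable f) {s : Set ℝ} (hs : MeasurableSet s)
    (hfin : volume s < ⊤) {M : ℝ} (hM : ∀ t ∈ s, |f t| ≤ M) : IntegrableOn f s := by
  refine Integrable.mono' (g := fun _ => M) (integrableOn_const hfin.ne) hf.aestronglyMeasurable.restrict ?_
  filter_upwards [ae_restrict_mem hs] with t ht using by simpa using hM t ht

lemma integral_c_exp (c s x : ℝ) :
    ∫ t in s..x, c * Real.exp (c * t) = Real.exp (c * x) - Real.exp (c * s) := by
  have hd : ∀ t : ℝ, HasDerivAt (fun t => Real.exp (c * t)) (c * Real.exp (c * t)) t := by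
    intro t
    have := (Real.hasDerivAt_exp (c * t)).comp t ((hasDerivAt_id t).const_mul c)
    simpa [mul_comm, Function.comp_def] using this
  rw [intervalIntegral.integral_eq_sub_of_hasDerivAt (fun t _ => hd t)
    (Continuous.intervalIntegrable (by continuity) _ _)]

lemma fubini_swap {x c : ℝ} (hx : x ∈ Icc (0:ℝ) 1) {d : ℝ → ℝ} (hd : Measurable d)
    (hbd : ∀ s ∈ Icc (0:ℝ) 1, |d s| ≤ 1) :
    ∫ t in Ioc (0:ℝ) x, (c * Real.exp (c * t)) * (∫ s in Ioc (0:ℝ) t, d s)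
      = ∫ s in Ioc (0:ℝ) x, (Real.exp (c * x) - Real.exp (c * s)) * d s := by
  obtain ⟨hx0, hx1⟩ := hx
  set A : Set ℝ := Ioc (0:ℝ) x with hA
  have hAm : MeasurableSet A := measurableSet_Ioc
  have hAfin : volume A < ⊤ := measure_Ioc_lt_top
  set F : ℝ → ℝ → ℝ := fun t s => if s ≤ t then c * Real.exp (c * t) * d s else 0 with hF
  -- integrability of uncurried F on product
  have hFmeas : Measurable (Function.uncurry F) := by
    apply Measurable.ite
    · exact measurableSet_le measurable_snd measurable_fst
    · exact ((measurable_const.mul (Real.measurable_exp.comp (measurable_fst.const_mul c))).mul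
        (hd.comp measurable_snd))
    · exact measurable_const
  have hFint : Integrable (Function.uncurry F) ((volume.restrict A).prod (volume.restrict A)) := by
    rw [Measure.prod_restrict]
    refine Integrable.mono' (g := fun _ => |c| * Real.exp |c|)
      (integrableOn_const ?_) hFmeas.aestronglyMeasurable.restrict ?_
    · rw [Measure.prod_prod]; exact (ENNReal.mul_lt_top hAfin hAfin).ne
    · filter_upwards [ae_restrict_mem (hAm.prod hAm)] with p hp
      obtain ⟨hp1, hp2⟩ := hp
      simp only [Function.uncurry, hF]
      split_ifs with h
      · have hct : c * p.1 ≤ |c| := by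
          calc c * p.1 ≤ |c * p.1| := le_abs_self _
          _ = |c| * |p.1| := abs_mul _ _
          _ ≤ |c| * 1 := by
              apply mul_le_mul_of_nonneg_left _ (abs_nonneg c)
              rw [abs_of_pos hp1.1]; exact hp1.2.trans hx1
          _ = |c| := mul_one _
        have hds : |d p.2| ≤ 1 := hbd p.2 ⟨hp2.1.le, hp2.2.trans hx1⟩
        have h1 : Real.exp (c * p.1) ≤ Real.exp |c| := Real.exp_le_exp.2 hct
        calc |c * Real.exp (c * p.1) * d p.2| = |c| * Real.exp (c * p.1) * |d p.2| := by
              rw [abs_mul, abs_mul, abs_of_pos (Real.exp_pos _)]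
        _ ≤ |c| * Real.exp |c| * 1 := by
              apply mul_le_mul (mul_le_mul_of_nonneg_left h1 (abs_nonneg c)) hds (abs_nonneg _)
              positivity
        _ = |c| * Real.exp |c| := mul_one _
      · simp; positivity
  -- Step A : rewrite LHS
  have stepA : ∀ t ∈ A, (c * Real.exp (c * t)) * (∫ s in Ioc (0:ℝ) t, d s) = ∫ s in A, F t s := by
    intro t ht
    have hfun : (fun s => F t s) = (Iic t).indicator (fun s => c * Real.exp (c * t) * d s) := by
      ext s; simp only [hF, indicator, mem_Iic]
    have hset : Iic t ∩ A = Ioc 0 t := by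
      rw [hA]; ext s; simp only [mem_inter_iff, mem_Iic, mem_Ioc]
      constructor
      · rintro ⟨h1, h2, h3⟩; exact ⟨h2, h1⟩
      · rintro ⟨h1, h2⟩; exact ⟨h2, h1, h2.trans ht.2⟩
    rw [hfun, integral_indicator measurableSet_Iic, Measure.restrict_restrict measurableSet_Iic,
      hset, integral_const_mul]
  -- Step C : inner integral after swap
  have stepC : ∀ s ∈ A, (∫ t in A, F t s) = (Real.exp (c * x) - Real.exp (c * s)) * d s := by
    intro s hs
    have hfun : (fun t => F t s) = (Ici s).indicator (fun t => c * Real.exp (c * t) * d s) := by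
      ext t; simp only [hF, indicator, mem_Ici]
    have hset : Ici s ∩ A = Icc s x := by
      rw [hA]; ext t; simp only [mem_inter_iff, mem_Ici, mem_Ioc, mem_Icc]
      constructor
      · rintro ⟨h1, h2, h3⟩; exact ⟨h1, h3⟩
      · rintro ⟨h1, h2⟩; exact ⟨h1, lt_of_lt_of_le hs.1 h1, h2⟩
    rw [hfun, integral_indicator measurableSet_Ici, Measure.restrict_restrict measurableSet_Ici,
      hset, integral_Icc_eq_integral_Ioc, ← intervalIntegral.integral_of_le hs.2,
      intervalIntegral.integral_mul_const, integral_c_exp]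
  calc ∫ t in A, (c * Real.exp (c * t)) * (∫ s in Ioc (0:ℝ) t, d s)
      = ∫ t in A, ∫ s in A, F t s := setIntegral_congr_fun hAm stepA
    _ = ∫ s in A, ∫ t in A, F t s := integral_integral_swap hFint
    _ = ∫ s in A, (Real.exp (c * x) - Real.exp (c * s)) * d s :=
        setIntegral_congr_fun hAm stepC

lemma ibp {x c : ℝ} (hx : x ∈ Icc (0:ℝ) 1) {d : ℝ → ℝ} (hd : Measurable d)
    (hbd : ∀ s ∈ Icc (0:ℝ) 1, |d s| ≤ 1) :
    ∫ s in Ioc (0:ℝ) x, Real.exp (c * s) * d s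
      = Real.exp (c * x) * (∫ s in Ioc (0:ℝ) x, d s)
        - ∫ t in Ioc (0:ℝ) x, (c * Real.exp (c * t)) * (∫ s in Ioc (0:ℝ) t, d s) := by
  rw [fubini_swap hx hd hbd]
  have hAsub : Ioc (0:ℝ) x ⊆ Icc (0:ℝ) 1 := fun t ht => ⟨ht.1.le, ht.2.trans hx.2⟩
  have hfin : volume (Ioc (0:ℝ) x) < ⊤ := measure_Ioc_lt_top
  have hint1 : IntegrableOn (fun s => Real.exp (c * x) * d s) (Ioc (0:ℝ) x) := by
    refine integrableOn_of_bound ((measurable_const).mul hd) measurableSet_Ioc hfin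
      (M := Real.exp (c * x)) ?_
    intro t ht
    simp only [Pi.mul_apply]
    rw [abs_mul, abs_of_pos (Real.exp_pos _)]
    nlinarith [hbd t (hAsub ht), Real.exp_pos (c * x), abs_nonneg (d t)]
  have hint2 : IntegrableOn (fun s => Real.exp (c * s) * d s) (Ioc (0:ℝ) x) := by
    refine integrableOn_of_bound (((measurable_id.const_mul c).exp).mul hd)
      measurableSet_Ioc hfin (M := Real.exp |c|) ?_
    intro t ht
    simp only [Pi.mul_apply]
    rw [abs_mul, abs_of_pos (Real.exp_pos _)]
    simp only [id_eq]
    have h1 : Real.exp (c * t) ≤ Real.exp |c| := by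
      apply Real.exp_le_exp.2
      calc c * t ≤ |c * t| := le_abs_self _
      _ = |c| * |t| := abs_mul _ _
      _ ≤ |c| * 1 := by
          apply mul_le_mul_of_nonneg_left _ (abs_nonneg c)
          rw [abs_of_nonneg (hAsub ht).1]; exact (hAsub ht).2
      _ = |c| := mul_one _
    nlinarith [hbd t (hAsub ht), Real.exp_pos (c * t), abs_nonneg (d t)]
  have : ∀ s, (Real.exp (c * x) - Real.exp (c * s)) * d s
      = Real.exp (c * x) * d s - Real.exp (c * s) * d s := fun s => by ring
  rw [funext this, integral_sub hint1 hint2, integral_const_mul]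
  ring

lemma exp_le_81 {t : ℝ} (ht : t ≤ 4) : Real.exp t ≤ 81 := by
  have h1 : Real.exp t ≤ Real.exp 4 := Real.exp_le_exp.2 ht
  have h2 : Real.exp 4 = Real.exp 1 ^ (4:ℕ) := by
    rw [← Real.exp_nat_mul]; norm_num
  have h3 : Real.exp 1 ≤ 3 := le_of_lt (by
    have := Real.exp_one_lt_d9; linarith)
  have h4 : Real.exp 1 ^ (4:ℕ) ≤ 3 ^ (4:ℕ) := pow_le_pow_left₀ (Real.exp_pos 1).le h3 4
  rw [h2] at h1; norm_num at h4; linarith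

lemma exp_le_3 {t : ℝ} (ht : t ≤ 1) : Real.exp t ≤ 3 := by
  have h1 : Real.exp t ≤ Real.exp 1 := Real.exp_le_exp.2 ht
  have := Real.exp_one_lt_d9; linarith

/-- Bound on the `f`-difference term, via integration by parts. -/
lemma term2_bound {γ x : ℝ} (hγ : γ ∈ Icc (0:ℝ) 4) (hx : x ∈ Icc (0:ℝ) 1) {d : ℝ → ℝ}
    (hd : Measurable d) (hbd : ∀ s ∈ Icc (0:ℝ) 1, |d s| ≤ 1) :
    |∫ s in Ioc (0:ℝ) x, Real.exp (γ * (x - s)) * Real.exp s * d s| ≤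
      3 * |∫ s in Ioc (0:ℝ) x, d s|
        + 26244 * ∫ t in Ioc (0:ℝ) 1, |∫ s in Ioc (0:ℝ) t, d s| := by
  set c : ℝ := 1 - γ with hc
  set g : ℝ → ℝ := fun t => ∫ s in Ioc (0:ℝ) t, d s with hg
  have hdint : IntegrableOn d (Icc (0:ℝ) 1) :=
    integrableOn_of_bound hd measurableSet_Icc measure_Icc_lt_top hbd
  have hgcont : ContinuousOn g (Icc (0:ℝ) 1) := intervalIntegral.continuousOn_primitive hdint
  have habsc : |c| ≤ 4 := by
    rw [abs_le]; constructor <;> [linarith [hγ.2]; linarith [hγ.1]]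
  -- rewrite the kernel
  have hker : (fun s => Real.exp (γ * (x - s)) * Real.exp s * d s)
      = fun s => Real.exp (γ * x) * (Real.exp (c * s) * d s) := by
    funext s
    have harg : γ * (x - s) + s = γ * x + c * s := by rw [hc]; ring
    calc Real.exp (γ * (x - s)) * Real.exp s * d s
        = Real.exp (γ * (x - s) + s) * d s := by rw [Real.exp_add]
      _ = Real.exp (γ * x + c * s) * d s := by rw [harg]
      _ = Real.exp (γ * x) * (Real.exp (c * s) * d s) := by rw [Real.exp_add, mul_assoc]
  rw [hker, integral_const_mul, ibp hx hd hbd]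
  -- bounds
  have hegx : Real.exp (γ * x) ≤ 81 := by
    apply exp_le_81; nlinarith [hγ.1, hγ.2, hx.1, hx.2]
  have hexp3 : Real.exp (γ * x) * Real.exp (c * x) ≤ 3 := by
    rw [← Real.exp_add]
    apply exp_le_3; rw [hc]; nlinarith [hx.1, hx.2]
  -- bound inner integral
  have hsub : Ioc (0:ℝ) x ⊆ Icc (0:ℝ) 1 := fun t ht => ⟨ht.1.le, ht.2.trans hx.2⟩
  have hsub1 : Ioc (0:ℝ) x ⊆ Ioc (0:ℝ) 1 := Ioc_subset_Ioc le_rfl hx.2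
  have hgabs_int : IntegrableOn (fun t => |g t|) (Ioc (0:ℝ) 1) :=
    ((hgcont.abs).integrableOn_Icc).mono_set Ioc_subset_Icc_self
  have hI0 : 0 ≤ ∫ t in Ioc (0:ℝ) 1, |g t| := by positivity
  have hinner : |∫ t in Ioc (0:ℝ) x, (c * Real.exp (c * t)) * g t|
      ≤ 324 * ∫ t in Ioc (0:ℝ) 1, |g t| := by
    calc |∫ t in Ioc (0:ℝ) x, (c * Real.exp (c * t)) * g t|
        ≤ ∫ t in Ioc (0:ℝ) x, |(c * Real.exp (c * t)) * g t| := by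
          have := norm_integral_le_integral_norm
            (μ := volume.restrict (Ioc (0:ℝ) x)) (fun t => (c * Real.exp (c * t)) * g t)
          simpa only [Real.norm_eq_abs] using this
      _ ≤ ∫ t in Ioc (0:ℝ) x, 324 * |g t| := by
          apply integral_mono_of_nonneg
          · filter_upwards with t using abs_nonneg _
          · exact (hgabs_int.mono_set hsub1).const_mul 324
          · filter_upwards [ae_restrict_mem measurableSet_Ioc] with t ht
            have h1 : Real.exp (c * t) ≤ 81 := by
              apply exp_le_81
              calc c * t ≤ |c * t| := le_abs_self _
                _ = |c| * |t| := abs_mul _ _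
                _ ≤ 4 * 1 := by
                    apply mul_le_mul habsc _ (abs_nonneg t) (by norm_num)
                    rw [abs_of_nonneg (hsub ht).1]; exact (hsub ht).2
                _ = 4 := by norm_num
            rw [abs_mul, abs_mul]
            have h2 : |Real.exp (c * t)| ≤ 81 := by
              rw [abs_of_pos (Real.exp_pos _)]; exact h1
            have h3 : |c| * |Real.exp (c * t)| ≤ 324 := by
              nlinarith [abs_nonneg c, abs_nonneg (Real.exp (c * t))]
            exact mul_le_mul_of_nonneg_right h3 (abs_nonneg _)
      _ ≤ ∫ t in Ioc (0:ℝ) 1, 324 * |g t| := by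
          apply setIntegral_mono_set (hgabs_int.const_mul 324)
          · filter_upwards with t using by positivity
          · exact HasSubset.Subset.eventuallyLE hsub1
      _ = 324 * ∫ t in Ioc (0:ℝ) 1, |g t| := integral_const_mul _ _
  calc |Real.exp (γ * x) * (Real.exp (c * x) * g x
          - ∫ t in Ioc (0:ℝ) x, (c * Real.exp (c * t)) * g t)|
      ≤ Real.exp (γ * x) * Real.exp (c * x) * |g x|
        + Real.exp (γ * x) * |∫ t in Ioc (0:ℝ) x, (c * Real.exp (c * t)) * g t| := by
        rw [abs_mul, abs_of_pos (Real.exp_pos _)]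
        calc Real.exp (γ * x) * |Real.exp (c * x) * g x
                - ∫ t in Ioc (0:ℝ) x, (c * Real.exp (c * t)) * g t|
            ≤ Real.exp (γ * x) * (|Real.exp (c * x) * g x|
              + |∫ t in Ioc (0:ℝ) x, (c * Real.exp (c * t)) * g t|) := by
              apply mul_le_mul_of_nonneg_left (abs_sub _ _) (Real.exp_pos _).le
          _ = Real.exp (γ * x) * (Real.exp (c * x) * |g x|)
              + Real.exp (γ * x) * |∫ t in Ioc (0:ℝ) x, (c * Real.exp (c * t)) * g t| := by
              rw [abs_mul, abs_of_pos (Real.exp_pos _)]; ring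
          _ = _ := by ring
    _ ≤ 3 * |g x| + 81 * (324 * ∫ t in Ioc (0:ℝ) 1, |g t|) := by
        apply add_le_add
        · exact mul_le_mul_of_nonneg_right hexp3 (abs_nonneg _) |>.trans_eq rfl
        · apply mul_le_mul hegx hinner (abs_nonneg _) (by norm_num)
    _ ≤ 3 * |g x| + 26244 * ∫ t in Ioc (0:ℝ) 1, |g t| := by
        rw [← mul_assoc]; norm_num

lemma abs_exp_sub_exp {a b M : ℝ} (ha : a ≤ M) (hb : b ≤ M) :
    |Real.exp a - Real.exp b| ≤ Real.exp M * |a - b| := by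
  have key : ∀ p q : ℝ, q ≤ p → p ≤ M → Real.exp p - Real.exp q ≤ Real.exp M * (p - q) := by
    intro p q hqp hpM
    have h1 : q - p + 1 ≤ Real.exp (q - p) := Real.add_one_le_exp _
    have h2 : Real.exp q = Real.exp p * Real.exp (q - p) := by
      rw [← Real.exp_add]; ring_nf
    have h3 : Real.exp p ≤ Real.exp M := Real.exp_le_exp.2 hpM
    nlinarith [Real.exp_pos p]
  rcases le_total b a with h | h
  · rw [abs_of_nonneg (by have := Real.exp_le_exp.2 h; linarith), abs_of_nonneg (by linarith)]
    exact key a b h ha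
  · rw [abs_of_nonpos (by have := Real.exp_le_exp.2 h; linarith), abs_of_nonpos (by linarith)]
    have := key b a h hb; linarith

lemma comp_bound {γ₁ γ₂ x : ℝ} (hγ₁ : γ₁ ∈ Icc (0:ℝ) 4) (hγ₂ : γ₂ ∈ Icc (0:ℝ) 4)
    (hx : x ∈ Icc (0:ℝ) 1) {f₁ f₂ : ℝ → ℝ} (h₁ : Measurable f₁) (h₂ : Measurable f₂)
    (hb₁ : ∀ s ∈ Icc (0:ℝ) 1, f₁ s ∈ Icc (1:ℝ) 2)
    (hb₂ : ∀ s ∈ Icc (0:ℝ) 1, f₂ s ∈ Icc (1:ℝ) 2) :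
    |v γ₁ f₁ x - v γ₂ f₂ x| ≤
      486 * |γ₁ - γ₂| + 3 * |∫ s in Ioc (0:ℝ) x, (f₁ s - f₂ s)|
        + 26244 * ∫ t in Ioc (0:ℝ) 1, |∫ s in Ioc (0:ℝ) t, (f₁ s - f₂ s)| := by
  have hsub : Ioc (0:ℝ) x ⊆ Icc (0:ℝ) 1 := fun t ht => ⟨ht.1.le, ht.2.trans hx.2⟩
  have hfin : volume (Ioc (0:ℝ) x) < ⊤ := measure_Ioc_lt_top
  have hd : Measurable (fun s => f₁ s - f₂ s) := h₁.sub h₂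
  have hbd : ∀ s ∈ Icc (0:ℝ) 1, |f₁ s - f₂ s| ≤ 1 := by
    intro s hs
    have ha := hb₁ s hs; have hbq := hb₂ s hs
    rw [abs_le]
    exact ⟨by linarith [ha.1, hbq.2], by linarith [ha.2, hbq.1]⟩
  -- kernel bounds on Ioc 0 x
  have hkb : ∀ γ ∈ Icc (0:ℝ) 4, ∀ s ∈ Ioc (0:ℝ) x,
      Real.exp (γ * (x - s)) * Real.exp s ≤ 243 := by
    intro γ hγ s hs
    have h1 : Real.exp (γ * (x - s)) ≤ 81 := by
      apply exp_le_81
      nlinarith [hγ.1, hγ.2, hs.1, hs.2, hx.2]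
    have h2 : Real.exp s ≤ 3 := exp_le_3 ((hsub hs).2)
    nlinarith [Real.exp_pos (γ * (x - s)), Real.exp_pos s]
  -- integrability
  have hI1 : IntegrableOn (fun s => Real.exp (γ₁ * (x - s)) * Real.exp s * f₁ s) (Ioc (0:ℝ) x) := by
    refine integrableOn_of_bound (by fun_prop) measurableSet_Ioc hfin (M := 486) ?_
    intro s hs
    rw [abs_mul]
    have := hkb γ₁ hγ₁ s hs
    have hf := hb₁ s (hsub hs)
    rw [abs_of_pos (by positivity), abs_of_pos (by linarith [hf.1])]
    nlinarith [Real.exp_pos (γ₁ * (x - s)), Real.exp_pos s, hf.1, hf.2]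
  have hI2 : IntegrableOn (fun s => Real.exp (γ₂ * (x - s)) * Real.exp s * f₂ s) (Ioc (0:ℝ) x) := by
    refine integrableOn_of_bound (by fun_prop) measurableSet_Ioc hfin (M := 486) ?_
    intro s hs
    rw [abs_mul]
    have := hkb γ₂ hγ₂ s hs
    have hf := hb₂ s (hsub hs)
    rw [abs_of_pos (by positivity), abs_of_pos (by linarith [hf.1])]
    nlinarith [Real.exp_pos (γ₂ * (x - s)), Real.exp_pos s, hf.1, hf.2]
  have hIa : IntegrableOn (fun s =>
      (Real.exp (γ₁ * (x - s)) - Real.exp (γ₂ * (x - s))) * Real.exp s * f₁ s) (Ioc (0:ℝ) x) := by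
    refine integrableOn_of_bound (by fun_prop) measurableSet_Ioc hfin (M := 972) ?_
    intro s hs
    rw [abs_mul, abs_mul]
    have h1 : |Real.exp (γ₁ * (x - s)) - Real.exp (γ₂ * (x - s))| ≤ 162 := by
      calc |Real.exp (γ₁ * (x - s)) - Real.exp (γ₂ * (x - s))|
          ≤ |Real.exp (γ₁ * (x - s))| + |Real.exp (γ₂ * (x - s))| := abs_sub _ _
        _ ≤ 81 + 81 := by
            rw [abs_of_pos (Real.exp_pos _), abs_of_pos (Real.exp_pos _)]
            have e1 : Real.exp (γ₁ * (x - s)) ≤ 81 := by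
              apply exp_le_81; nlinarith [hγ₁.1, hγ₁.2, hs.1, hs.2, hx.2]
            have e2 : Real.exp (γ₂ * (x - s)) ≤ 81 := by
              apply exp_le_81; nlinarith [hγ₂.1, hγ₂.2, hs.1, hs.2, hx.2]
            linarith
        _ = 162 := by norm_num
    have h2 : |Real.exp s| ≤ 3 := by
      rw [abs_of_pos (Real.exp_pos _)]; exact exp_le_3 ((hsub hs).2)
    have h3 : |f₁ s| ≤ 2 := by
      have hf := hb₁ s (hsub hs)
      rw [abs_of_pos (by linarith [hf.1])]; exact hf.2
    calc |Real.exp (γ₁ * (x - s)) - Real.exp (γ₂ * (x - s))| * |Real.exp s| * |f₁ s|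
        ≤ 162 * 3 * 2 := by
          apply mul_le_mul _ h3 (abs_nonneg _) (by norm_num)
          apply mul_le_mul h1 h2 (abs_nonneg _) (by norm_num)
      _ = 972 := by norm_num
  have hIb : IntegrableOn (fun s =>
      Real.exp (γ₂ * (x - s)) * Real.exp s * (f₁ s - f₂ s)) (Ioc (0:ℝ) x) := by
    refine integrableOn_of_bound (by fun_prop) measurableSet_Ioc hfin (M := 243) ?_
    intro s hs
    rw [abs_mul]
    have h1 := hkb γ₂ hγ₂ s hs
    have h2 := hbd s (hsub hs)
    rw [abs_of_pos (by positivity)]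
    nlinarith [Real.exp_pos (γ₂ * (x - s)), Real.exp_pos s, abs_nonneg (f₁ s - f₂ s)]
  -- splitting
  have hsplit : v γ₁ f₁ x - v γ₂ f₂ x =
      (∫ s in Ioc (0:ℝ) x, (Real.exp (γ₁ * (x - s)) - Real.exp (γ₂ * (x - s))) * Real.exp s * f₁ s)
      + ∫ s in Ioc (0:ℝ) x, Real.exp (γ₂ * (x - s)) * Real.exp s * (f₁ s - f₂ s) := by
    rw [v, v, intervalIntegral.integral_of_le hx.1, intervalIntegral.integral_of_le hx.1,
      ← integral_sub hI1 hI2, ← integral_add hIa hIb]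
    congr 1
    funext s
    ring
  rw [hsplit]
  -- term 1 bound
  have hT1 : |∫ s in Ioc (0:ℝ) x,
      (Real.exp (γ₁ * (x - s)) - Real.exp (γ₂ * (x - s))) * Real.exp s * f₁ s|
      ≤ 486 * |γ₁ - γ₂| := by
    have hC : ∀ s ∈ Ioc (0:ℝ) x,
        ‖(Real.exp (γ₁ * (x - s)) - Real.exp (γ₂ * (x - s))) * Real.exp s * f₁ s‖
          ≤ 486 * |γ₁ - γ₂| := by
      intro s hs
      rw [Real.norm_eq_abs, abs_mul, abs_mul]
      have h1 : |Real.exp (γ₁ * (x - s)) - Real.exp (γ₂ * (x - s))| ≤ 81 * |γ₁ - γ₂| := by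
        have key := abs_exp_sub_exp (M := 4)
          (by nlinarith [hγ₁.1, hγ₁.2, hs.1, hs.2, hx.2] : γ₁ * (x - s) ≤ 4)
          (by nlinarith [hγ₂.1, hγ₂.2, hs.1, hs.2, hx.2] : γ₂ * (x - s) ≤ 4)
        have h81 : Real.exp 4 ≤ 81 := exp_le_81 le_rfl
        have harg : |γ₁ * (x - s) - γ₂ * (x - s)| = |γ₁ - γ₂| * (x - s) := by
          rw [show γ₁ * (x - s) - γ₂ * (x - s) = (γ₁ - γ₂) * (x - s) by ring, abs_mul,
            abs_of_nonneg (by linarith [hs.2] : (0:ℝ) ≤ x - s)]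
        rw [harg] at key
        calc |Real.exp (γ₁ * (x - s)) - Real.exp (γ₂ * (x - s))|
            ≤ Real.exp 4 * (|γ₁ - γ₂| * (x - s)) := key
          _ ≤ 81 * (|γ₁ - γ₂| * 1) := by
              apply mul_le_mul h81 _ (mul_nonneg (abs_nonneg _) (by linarith [hs.2])) (by norm_num)
              apply mul_le_mul_of_nonneg_left _ (abs_nonneg _)
              linarith [hs.1, hx.2]
          _ = 81 * |γ₁ - γ₂| := by ring
      have h2 : |Real.exp s| ≤ 3 := by
        rw [abs_of_pos (Real.exp_pos _)]; exact exp_le_3 ((hsub hs).2)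
      have h3 : |f₁ s| ≤ 2 := by
        have hf := hb₁ s (hsub hs)
        rw [abs_of_pos (by linarith [hf.1])]; exact hf.2
      calc |Real.exp (γ₁ * (x - s)) - Real.exp (γ₂ * (x - s))| * |Real.exp s| * |f₁ s|
          ≤ (81 * |γ₁ - γ₂|) * 3 * 2 := by
            apply mul_le_mul _ h3 (abs_nonneg _) (by positivity)
            apply mul_le_mul h1 h2 (abs_nonneg _) (by positivity)
        _ = 486 * |γ₁ - γ₂| := by ring
    have := norm_setIntegral_le_of_norm_le_const (μ := volume) hfin hC
    rw [Real.norm_eq_abs] at this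
    calc |∫ s in Ioc (0:ℝ) x,
        (Real.exp (γ₁ * (x - s)) - Real.exp (γ₂ * (x - s))) * Real.exp s * f₁ s|
        ≤ 486 * |γ₁ - γ₂| * (volume (Ioc (0:ℝ) x)).toReal := this
      _ ≤ 486 * |γ₁ - γ₂| * 1 := by
          apply mul_le_mul_of_nonneg_left _ (by positivity)
          rw [Real.volume_Ioc, ENNReal.toReal_ofReal (by linarith [hx.1] : (0:ℝ) ≤ x - 0)]
          linarith [hx.2]
      _ = 486 * |γ₁ - γ₂| := mul_one _
  have hT2 := term2_bound hγ₂ hx hd hbd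
  calc |(∫ s in Ioc (0:ℝ) x,
        (Real.exp (γ₁ * (x - s)) - Real.exp (γ₂ * (x - s))) * Real.exp s * f₁ s)
      + ∫ s in Ioc (0:ℝ) x, Real.exp (γ₂ * (x - s)) * Real.exp s * (f₁ s - f₂ s)|
      ≤ |∫ s in Ioc (0:ℝ) x,
          (Real.exp (γ₁ * (x - s)) - Real.exp (γ₂ * (x - s))) * Real.exp s * f₁ s|
        + |∫ s in Ioc (0:ℝ) x, Real.exp (γ₂ * (x - s)) * Real.exp s * (f₁ s - f₂ s)| :=
        abs_add_le _ _
    _ ≤ 486 * |γ₁ - γ₂| + (3 * |∫ s in Ioc (0:ℝ) x, (f₁ s - f₂ s)|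
        + 26244 * ∫ t in Ioc (0:ℝ) 1, |∫ s in Ioc (0:ℝ) t, (f₁ s - f₂ s)|) :=
        add_le_add hT1 hT2
    _ = _ := by ring

set_option maxHeartbeats 2000000 in
/-- Lipschitz condition (7) of Assumption 3(a) with r = 1 for the SemiPDE model of Example 3. -/
theorem lipschitz_condition_r_one :
    ∃ C : ℝ, 0 ≤ C ∧
      ∀ β₁ ∈ Set.Icc (0:ℝ) 2, ∀ β₂ ∈ Set.Icc (0:ℝ) 2,
        ∀ f₁ f₂ : ℝ → ℝ, Measurable f₁ → Measurable f₂ →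
          (∀ s ∈ Set.Icc (0:ℝ) 1, f₁ s ∈ Set.Icc (1:ℝ) 2) →
          (∀ s ∈ Set.Icc (0:ℝ) 1, f₂ s ∈ Set.Icc (1:ℝ) 2) →
          L2v (fun x => u β₁ f₁ x - u β₂ f₂ x) ≤
            C * (|β₁ - β₂| + L2 (Γ (fun x => f₁ x - f₂ x))) := by
  refine ⟨104976, by norm_num, ?_⟩
  intro β₁ hβ₁ β₂ hβ₂ f₁ f₂ h₁ h₂ hb₁ hb₂
  set d : ℝ → ℝ := fun s => f₁ s - f₂ s with hd_def
  have hd : Measurable d := h₁.sub h₂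
  have hbd : ∀ s ∈ Icc (0:ℝ) 1, |d s| ≤ 1 := by
    intro s hs
    have ha := hb₁ s hs; have hbq := hb₂ s hs
    show |f₁ s - f₂ s| ≤ 1
    rw [abs_le]
    exact ⟨by linarith [ha.1, hbq.2], by linarith [ha.2, hbq.1]⟩
  set g : ℝ → ℝ := fun t => ∫ s in Ioc (0:ℝ) t, d s with hg_def
  set Δ : ℝ := |β₁ - β₂| with hΔ_def
  have hΔ0 : 0 ≤ Δ := abs_nonneg _
  have hdint : IntegrableOn d (Icc (0:ℝ) 1) :=
    integrableOn_of_bound hd measurableSet_Icc measure_Icc_lt_top hbd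
  have hgcont : ContinuousOn g (Icc (0:ℝ) 1) := intervalIntegral.continuousOn_primitive hdint
  set I : ℝ := ∫ t in Ioc (0:ℝ) 1, |g t| with hI_def
  set Q : ℝ := ∫ t in Ioc (0:ℝ) 1, (g t) ^ 2 with hQ_def
  have hgabs_int : IntegrableOn (fun t => |g t|) (Ioc (0:ℝ) 1) :=
    (hgcont.abs.integrableOn_Icc).mono_set Ioc_subset_Icc_self
  have hgsq_int : IntegrableOn (fun t => (g t) ^ 2) (Ioc (0:ℝ) 1) :=
    ((hgcont.pow 2).integrableOn_Icc).mono_set Ioc_subset_Icc_self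
  have hI0 : 0 ≤ I := integral_nonneg fun t => abs_nonneg _
  have hQ0 : 0 ≤ Q := integral_nonneg fun t => sq_nonneg _
  have hvol : (volume (Ioc (0:ℝ) 1)).toReal = 1 := by
    rw [Real.volume_Ioc]; norm_num
  -- Cauchy-Schwarz : I² ≤ Q
  have hCS : I ^ 2 ≤ Q := by
    have h0 : 0 ≤ ∫ t in Ioc (0:ℝ) 1, (|g t| - I) ^ 2 :=
      integral_nonneg fun t => sq_nonneg _
    have hexp : ∫ t in Ioc (0:ℝ) 1, (|g t| - I) ^ 2 = Q - 2 * I * I + I ^ 2 := by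
      have hfe : (fun t => (|g t| - I) ^ 2)
          = fun t => ((g t) ^ 2 - 2 * I * |g t|) + I ^ 2 := by
        funext t
        rw [sub_sq, sq_abs]; ring
      have hii1 : IntegrableOn (fun t => (g t) ^ 2 - 2 * I * |g t|) (Ioc (0:ℝ) 1) :=
        hgsq_int.sub (hgabs_int.const_mul (2 * I))
      have hii2 : IntegrableOn (fun t => 2 * I * |g t|) (Ioc (0:ℝ) 1) :=
        hgabs_int.const_mul (2 * I)
      rw [hfe, integral_add hii1 (integrableOn_const measure_Ioc_lt_top.ne),
        integral_sub hgsq_int hii2, integral_const_mul,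
        setIntegral_const, measureReal_def, hvol, smul_eq_mul, one_mul]
    nlinarith [h0, hexp]
  -- pointwise bound
  have hpt : ∀ x ∈ Ioc (0:ℝ) 1,
      ((u β₁ f₁ x - u β₂ f₂ x).1 ^ 2 + (u β₁ f₁ x - u β₂ f₂ x).2 ^ 2)
        ≤ 6 * 26244 ^ 2 * (Δ ^ 2 + (g x) ^ 2 + I ^ 2) := by
    intro x hx
    have hxI : x ∈ Icc (0:ℝ) 1 := ⟨hx.1.le, hx.2⟩
    have hm1 : β₁ ∈ Icc (0:ℝ) 4 := ⟨hβ₁.1, by linarith [hβ₁.2]⟩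
    have hm2 : β₂ ∈ Icc (0:ℝ) 4 := ⟨hβ₂.1, by linarith [hβ₂.2]⟩
    have hm3 : 2 * β₁ ∈ Icc (0:ℝ) 4 := ⟨by linarith [hβ₁.1], by linarith [hβ₁.2]⟩
    have hm4 : 2 * β₂ ∈ Icc (0:ℝ) 4 := ⟨by linarith [hβ₂.1], by linarith [hβ₂.2]⟩
    have ha := comp_bound hm1 hm2 hxI h₁ h₂ hb₁ hb₂
    have hb := comp_bound hm3 hm4 hxI h₁ h₂ hb₁ hb₂
    have habs2 : |2 * β₁ - 2 * β₂| = 2 * Δ := by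
      rw [hΔ_def, show 2 * β₁ - 2 * β₂ = 2 * (β₁ - β₂) by ring, abs_mul, abs_two]
    rw [habs2] at hb
    have hcomp1 : (u β₁ f₁ x - u β₂ f₂ x).1 = v β₁ f₁ x - v β₂ f₂ x := rfl
    have hcomp2 : (u β₁ f₁ x - u β₂ f₂ x).2 = v (2 * β₁) f₁ x - v (2 * β₂) f₂ x := rfl
    rw [hcomp1, hcomp2]
    set a := v β₁ f₁ x - v β₂ f₂ x
    set b := v (2 * β₁) f₁ x - v (2 * β₂) f₂ x
    have hgx : (∫ s in Ioc (0:ℝ) x, (f₁ s - f₂ s)) = g x := by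
      simp only [hg_def, hd_def]
    have hIeq : (∫ t in Ioc (0:ℝ) 1, |∫ s in Ioc (0:ℝ) t, (f₁ s - f₂ s)|) = I := by
      simp only [hI_def, hg_def, hd_def]
    rw [hgx, hIeq] at ha hb
    set S : ℝ := Δ + |g x| + I with hS_def
    have hS0 : 0 ≤ S := by
      rw [hS_def]; exact add_nonneg (add_nonneg hΔ0 (abs_nonneg _)) hI0
    have haS : |a| ≤ 26244 * S := by
      rw [hS_def]
      calc |a| ≤ 486 * Δ + 3 * |g x| + 26244 * I := ha
        _ ≤ 26244 * (Δ + |g x| + I) := by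
            have := abs_nonneg (g x); nlinarith
    have hbS : |b| ≤ 26244 * S := by
      rw [hS_def]
      calc |b| ≤ 486 * (2 * Δ) + 3 * |g x| + 26244 * I := hb
        _ ≤ 26244 * (Δ + |g x| + I) := by
            have := abs_nonneg (g x); nlinarith
    have ha2 : a ^ 2 ≤ 26244 ^ 2 * S ^ 2 := by
      have := pow_le_pow_left₀ (abs_nonneg a) haS 2
      rw [sq_abs] at this
      calc a ^ 2 ≤ (26244 * S) ^ 2 := this
        _ = 26244 ^ 2 * S ^ 2 := by ring
    have hb2 : b ^ 2 ≤ 26244 ^ 2 * S ^ 2 := by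
      have := pow_le_pow_left₀ (abs_nonneg b) hbS 2
      rw [sq_abs] at this
      calc b ^ 2 ≤ (26244 * S) ^ 2 := this
        _ = 26244 ^ 2 * S ^ 2 := by ring
    have hS2 : S ^ 2 ≤ 3 * (Δ ^ 2 + (g x) ^ 2 + I ^ 2) := by
      rw [hS_def]
      nlinarith [sq_nonneg (Δ - |g x|), sq_nonneg (Δ - I), sq_nonneg (|g x| - I), sq_abs (g x)]
    nlinarith [ha2, hb2, hS2]
  -- integrate the pointwise bound
  have hmono : (∫ x in Ioc (0:ℝ) 1,
        ((u β₁ f₁ x - u β₂ f₂ x).1 ^ 2 + (u β₁ f₁ x - u β₂ f₂ x).2 ^ 2))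
      ≤ ∫ x in Ioc (0:ℝ) 1, 6 * 26244 ^ 2 * (Δ ^ 2 + (g x) ^ 2 + I ^ 2) := by
    apply integral_mono_of_nonneg
    · filter_upwards with x using by positivity
    · have hc : ContinuousOn (fun x => 6 * 26244 ^ 2 * (Δ ^ 2 + (g x) ^ 2 + I ^ 2))
          (Icc (0:ℝ) 1) :=
        continuousOn_const.mul ((continuousOn_const.add (hgcont.pow 2)).add continuousOn_const)
      exact (hc.integrableOn_Icc).mono_set Ioc_subset_Icc_self
    · filter_upwards [ae_restrict_mem measurableSet_Ioc] with x hx using hpt x hx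
  have hrhs : (∫ x in Ioc (0:ℝ) 1, 6 * 26244 ^ 2 * (Δ ^ 2 + (g x) ^ 2 + I ^ 2))
      = 6 * 26244 ^ 2 * (Δ ^ 2 + Q + I ^ 2) := by
    have hjj1 : IntegrableOn (fun x => Δ ^ 2 + (g x) ^ 2) (Ioc (0:ℝ) 1) :=
      (integrableOn_const measure_Ioc_lt_top.ne).add hgsq_int
    rw [integral_const_mul, integral_add hjj1 (integrableOn_const measure_Ioc_lt_top.ne),
      integral_add (integrableOn_const (C := Δ ^ 2) measure_Ioc_lt_top.ne) hgsq_int,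
      setIntegral_const, setIntegral_const, measureReal_def, hvol, smul_eq_mul, smul_eq_mul, one_mul, one_mul]
  -- identify L2 (Γ d) with √Q
  have hL2Q : L2 (Γ (fun x => f₁ x - f₂ x)) = Real.sqrt Q := by
    rw [L2, intervalIntegral.integral_of_le zero_le_one, hQ_def]
    congr 1
    apply setIntegral_congr_fun measurableSet_Ioc
    intro x hx
    simp only [Γ]
    rw [intervalIntegral.integral_of_le hx.1.le]
  -- final computation
  rw [L2v, intervalIntegral.integral_of_le zero_le_one, hL2Q]
  have hkey : (∫ x in Ioc (0:ℝ) 1,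
        (((fun x => u β₁ f₁ x - u β₂ f₂ x) x).1 ^ 2 + ((fun x => u β₁ f₁ x - u β₂ f₂ x) x).2 ^ 2))
      ≤ (104976 * (Δ + Real.sqrt Q)) ^ 2 := by
    have hsq : Real.sqrt Q ^ 2 = Q := Real.sq_sqrt hQ0
    have h6 : 6 * 26244 ^ 2 * (Δ ^ 2 + Q + I ^ 2) ≤ (104976 * (Δ + Real.sqrt Q)) ^ 2 := by
      nlinarith [hCS, hsq, Real.sqrt_nonneg Q, hΔ0, mul_nonneg hΔ0 (Real.sqrt_nonneg Q)]
    calc (∫ x in Ioc (0:ℝ) 1, ((u β₁ f₁ x - u β₂ f₂ x).1 ^ 2 + (u β₁ f₁ x - u β₂ f₂ x).2 ^ 2))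
        ≤ 6 * 26244 ^ 2 * (Δ ^ 2 + Q + I ^ 2) := by rw [← hrhs]; exact hmono
      _ ≤ _ := h6
  calc Real.sqrt (∫ x in Ioc (0:ℝ) 1,
        (((fun x => u β₁ f₁ x - u β₂ f₂ x) x).1 ^ 2 + ((fun x => u β₁ f₁ x - u β₂ f₂ x) x).2 ^ 2))
      ≤ Real.sqrt ((104976 * (Δ + Real.sqrt Q)) ^ 2) := Real.sqrt_le_sqrt hkey
    _ = 104976 * (Δ + Real.sqrt Q) := by
        rw [Real.sqrt_sq (mul_nonneg (by norm_num) (add_nonneg hΔ0 (Real.sqrt_nonneg Q)))]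
end

section
/- For every measurable function f₀ : [0,1] → [1,2] there exists a constant c > 0 such that for all β ∈ [0,2] and all measurable f : [0,1] → [1,2], one has ‖u(·; β, f) − u(·; 1, f₀)‖²_{L²} ≥ c (|β − 1|² + ‖Γ(f − f₀)‖²_{L²}). (This is the stability condition (8) of Assumption 3(b) with r' = 1 for the SemiPDE model of Example 3, with true parameter θ₀ = (1, 2) and true nonparametric component f₀.) -/
open MeasureTheory Set intervalIntegral

/-! ### Auxiliary lemmas -/

lemma II {g : ℝ → ℝ} (hg : Measurable g) {C : ℝ} (hb : ∀ s ∈ Icc (0:ℝ) 1, |g s| ≤ C)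
    {x : ℝ} (hx : 0 ≤ x) (h1 : x ≤ 1) : IntervalIntegrable g volume 0 x := by
  rw [intervalIntegrable_iff_integrableOn_Ioc_of_le hx]
  apply Measure.integrableOn_of_bounded (M := C)
  · simp [Real.volume_Ioc]
  · exact hg.aestronglyMeasurable
  · filter_upwards [ae_restrict_mem measurableSet_Ioc] with s hs
    exact hb s ⟨hs.1.le, hs.2.trans h1⟩

lemma IIcc {g : ℝ → ℝ} (hg : Measurable g) {C : ℝ} (hb : ∀ s ∈ Icc (0:ℝ) 1, |g s| ≤ C) :
    IntegrableOn g (Icc (0:ℝ) 1) volume := by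
  apply Measure.integrableOn_of_bounded (M := C)
  · simp [Real.volume_Icc]
  · exact hg.aestronglyMeasurable
  · filter_upwards [ae_restrict_mem measurableSet_Icc] with s hs using hb s hs

lemma expb {c y : ℝ} (hc : |c| ≤ 4) (hy : |y| ≤ 1) : Real.exp (c * y) ≤ 81 := by
  have h1 : c * y ≤ 4 := by
    calc c * y ≤ |c * y| := le_abs_self _
    _ = |c| * |y| := abs_mul _ _
    _ ≤ 4 * 1 := mul_le_mul hc hy (abs_nonneg _) (by norm_num)
    _ = 4 := by norm_num
  have := Real.exp_one_lt_d9
  have hp := Real.exp_pos 1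
  calc Real.exp (c * y) ≤ Real.exp 4 := Real.exp_le_exp.2 h1
  _ = Real.exp 1 * Real.exp 1 * (Real.exp 1 * Real.exp 1) := by
      rw [show (4:ℝ) = 1 + 1 + (1 + 1) from by norm_num, Real.exp_add, Real.exp_add]
  _ ≤ 7.4 * 7.4 := by
      have h4 : Real.exp 1 * Real.exp 1 ≤ 7.4 := by nlinarith
      exact mul_le_mul h4 h4 (by positivity) (by norm_num)
  _ ≤ 81 := by norm_num

lemma exp_le_three {y : ℝ} (hy : y ≤ 1) : Real.exp y ≤ 3 := by
  calc Real.exp y ≤ Real.exp 1 := Real.exp_le_exp.2 hy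
  _ ≤ 3 := by nlinarith [Real.exp_one_lt_d9]

lemma measE (c x : ℝ) : Measurable (fun s => Real.exp (c * (x - s))) :=
  Real.measurable_exp.comp ((measurable_const.sub measurable_id).const_mul c)

lemma measE1 (x : ℝ) : Measurable (fun s => Real.exp (x - s)) :=
  Real.measurable_exp.comp (measurable_const.sub measurable_id)

lemma IIv {c x C : ℝ} {g : ℝ → ℝ} (hg : Measurable g) (hc : |c| ≤ 4) (hx : 0 ≤ x)
    (hx1 : x ≤ 1) (hb : ∀ s ∈ Icc (0:ℝ) 1, |g s| ≤ C) :
    IntervalIntegrable (fun s => Real.exp (c * (x - s)) * Real.exp s * g s) volume 0 x := by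
  apply II (((measE c x).mul Real.measurable_exp).mul hg) (C := 243 * C) _ hx hx1
  intro s hs
  have h1 : Real.exp (c * (x - s)) ≤ 81 := by
    apply expb hc
    rw [abs_le]; constructor <;> [linarith [hs.2, hx]; linarith [hs.1, hx1]]
  have h2 : Real.exp s ≤ 3 := exp_le_three hs.2
  have hC : 0 ≤ C := (abs_nonneg _).trans (hb 0 (by norm_num))
  simp only [Pi.mul_apply]
  rw [abs_mul, abs_mul, Real.abs_exp, Real.abs_exp]
  have hm : Real.exp (c * (x - s)) * Real.exp s * |g s| ≤ 81 * 3 * C :=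
    mul_le_mul (mul_le_mul h1 h2 (Real.exp_pos _).le (by norm_num)) (hb s hs)
      (abs_nonneg _) (by positivity)
  linarith

lemma v_eq (c : ℝ) (g : ℝ → ℝ) (x : ℝ) :
    v c g x = Real.exp (c * x) * ∫ s in (0:ℝ)..x, Real.exp ((1 - c) * s) * g s := by
  rw [v, ← intervalIntegral.integral_const_mul]
  apply intervalIntegral.integral_congr
  intro s _
  show Real.exp (c * (x - s)) * Real.exp s * g s = Real.exp (c * x) * (Real.exp ((1 - c) * s) * g s)
  rw [← mul_assoc, ← Real.exp_add, ← Real.exp_add,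
    show c * (x - s) + s = c * x + (1 - c) * s from by ring]

lemma v_cont_s3 {c : ℝ} {g : ℝ → ℝ} (hg : Measurable g) {C : ℝ}
    (hc : |1 - c| ≤ 4) (hb : ∀ s ∈ Icc (0:ℝ) 1, |g s| ≤ C) :
    ContinuousOn (v c g) (Icc 0 1) := by
  have hfun : v c g = fun x => Real.exp (c * x) *
      ∫ s in (0:ℝ)..x, Real.exp ((1 - c) * s) * g s := funext (v_eq c g)
  rw [hfun]
  apply ContinuousOn.mul
  · exact (Real.continuous_exp.comp (continuous_const.mul continuous_id)).continuousOn
  · have hC : 0 ≤ C := (abs_nonneg _).trans (hb 0 (by norm_num))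
    have hint : IntegrableOn (fun s => Real.exp ((1 - c) * s) * g s) (uIcc (0:ℝ) 1) volume := by
      rw [uIcc_of_le zero_le_one]
      have hmeas : Measurable (fun s => Real.exp ((1 - c) * s) * g s) :=
        (Real.measurable_exp.comp (measurable_const.mul measurable_id)).mul hg
      apply IIcc hmeas (C := 81 * C)
      intro s hs
      rw [abs_mul, Real.abs_exp]
      have h1 : Real.exp ((1 - c) * s) ≤ 81 :=
        expb hc (by rw [abs_le]; exact ⟨by linarith [hs.1], hs.2⟩)
      exact mul_le_mul h1 (hb s hs) (abs_nonneg _) (by norm_num)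
    have := intervalIntegral.continuousOn_primitive_interval hint
    rwa [uIcc_of_le zero_le_one] at this

lemma exp_sub_ge' {a b : ℝ} : (a - b) * Real.exp b ≤ Real.exp a - Real.exp b := by
  have h1 : Real.exp a = Real.exp (a-b) * Real.exp b := by rw [← Real.exp_add]; ring_nf
  have h2 : 1 + (a-b) ≤ Real.exp (a-b) := by linarith [Real.add_one_le_exp (a-b)]
  nlinarith [Real.exp_pos b]

lemma exp_sub_le' {a b : ℝ} : Real.exp a - Real.exp b ≤ (a - b) * Real.exp a := by
  have h1 : Real.exp b = Real.exp (b-a) * Real.exp a := by rw [← Real.exp_add]; ring_nf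
  have h2 : 1 + (b-a) ≤ Real.exp (b-a) := by linarith [Real.add_one_le_exp (b-a)]
  nlinarith [Real.exp_pos a]

lemma expdiff_abs_le {β t : ℝ} (hβ0 : 0 ≤ β) (hβ2 : β ≤ 2) (ht : 0 ≤ t) (ht1 : t ≤ 1) :
    |Real.exp (β * t) - Real.exp t| ≤ 9 * |β - 1| * t := by
  have h9 : ∀ y : ℝ, y ≤ 2 → Real.exp y ≤ 9 := by
    intro y hy
    calc Real.exp y ≤ Real.exp 2 := Real.exp_le_exp.2 hy
    _ = Real.exp 1 * Real.exp 1 := by rw [← Real.exp_add]; norm_num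
    _ ≤ 9 := by nlinarith [Real.exp_one_lt_d9, Real.exp_pos 1]
  rcases le_total 1 β with hb | hb
  · have h1 : Real.exp (β * t) - Real.exp t ≤ (β * t - t) * Real.exp (β * t) := exp_sub_le'
    have h2 : Real.exp (β * t) ≤ 9 := h9 _ (by nlinarith)
    have h0 : 0 ≤ Real.exp (β * t) - Real.exp t := by
      have := Real.exp_le_exp.2 (by nlinarith : t ≤ β * t); linarith
    rw [abs_of_nonneg h0, abs_of_nonneg (by linarith : (0:ℝ) ≤ β - 1)]
    nlinarith [mul_le_mul_of_nonneg_left h2 (mul_nonneg (by linarith : (0:ℝ) ≤ β - 1) ht)]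
  · have h1 : Real.exp t - Real.exp (β * t) ≤ (t - β * t) * Real.exp t := exp_sub_le'
    have h2 : Real.exp t ≤ 9 := h9 _ (by linarith)
    have h0 : 0 ≤ Real.exp t - Real.exp (β * t) := by
      have := Real.exp_le_exp.2 (by nlinarith : β * t ≤ t); linarith
    rw [abs_of_nonpos (by linarith : Real.exp (β * t) - Real.exp t ≤ 0),
      abs_of_nonpos (by linarith : β - 1 ≤ 0)]
    nlinarith [mul_le_mul_of_nonneg_left h2 (mul_nonneg (by linarith : (0:ℝ) ≤ 1 - β) ht)]

lemma expdiff_ge {β t : ℝ} (hβ : 1 ≤ β) (ht : 0 ≤ t) :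
    (β - 1) * t ≤ Real.exp (β * t) - Real.exp t := by
  have h1 : (β * t - t) * Real.exp t ≤ Real.exp (β * t) - Real.exp t := exp_sub_ge'
  nlinarith [Real.one_le_exp ht, mul_nonneg (by linarith : (0:ℝ) ≤ β - 1) ht]

lemma expdiff_le2 {β t : ℝ} (hβ0 : 0 ≤ β) (hβ : β ≤ 1) (ht : 0 ≤ t) :
    Real.exp (β * t) - Real.exp t ≤ (β - 1) * t := by
  have h1 : (t - β * t) * Real.exp (β * t) ≤ Real.exp t - Real.exp (β * t) := exp_sub_ge'
  nlinarith [Real.one_le_exp (mul_nonneg hβ0 ht), mul_nonneg (by linarith : (0:ℝ) ≤ 1 - β) ht]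

lemma integral_x_sub {x : ℝ} : ∫ s in (0:ℝ)..x, (x - s) = x ^ 2 / 2 := by
  have := intervalIntegral.integral_comp_sub_left (fun u => u) x (a := 0) (b := x)
  simp only [sub_self, sub_zero] at this
  rw [this, integral_id]
  ring

lemma mono_upper {g : ℝ → ℝ} (hg : ContinuousOn g (Icc 0 1))
    (hgpos : ∀ y ∈ Icc (0:ℝ) 1, 0 ≤ g y) {a b : ℝ} (ha : 0 ≤ a) (hab : a ≤ b) (hb1 : b ≤ 1) :
    ∫ y in (0:ℝ)..a, g y ≤ ∫ y in (0:ℝ)..b, g y := by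
  have i1 : IntervalIntegrable g volume 0 a :=
    (hg.mono (by rw [uIcc_of_le ha]; exact Icc_subset_Icc le_rfl (le_trans hab hb1))).intervalIntegrable
  have i2 : IntervalIntegrable g volume a b :=
    (hg.mono (by rw [uIcc_of_le hab]; exact Icc_subset_Icc ha hb1)).intervalIntegrable
  have h2 : 0 ≤ ∫ y in a..b, g y :=
    intervalIntegral.integral_nonneg hab (fun y hy => hgpos y ⟨le_trans ha hy.1, le_trans hy.2 hb1⟩)
  have := intervalIntegral.integral_add_adjacent_intervals i1 i2
  linarith

lemma CS_s3 {g : ℝ → ℝ} (hg : ContinuousOn g (Icc 0 1)) {x : ℝ} (hx : 0 ≤ x) (hx1 : x ≤ 1) :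
    (∫ s in (0:ℝ)..x, |g s|) ^ 2 ≤ x * ∫ s in (0:ℝ)..x, (g s) ^ 2 := by
  rcases eq_or_lt_of_le hx with rfl | hxpos
  · simp
  have hsub : uIcc (0:ℝ) x ⊆ Icc 0 1 := by
    rw [uIcc_of_le hx]; exact Icc_subset_Icc le_rfl hx1
  have hgc : ContinuousOn g (uIcc 0 x) := hg.mono hsub
  have iabs : IntervalIntegrable (fun s => |g s|) volume 0 x := hgc.abs.intervalIntegrable
  have isq : IntervalIntegrable (fun s => (g s) ^ 2) volume 0 x :=
    (hgc.pow 2).intervalIntegrable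
  set m : ℝ := (∫ s in (0:ℝ)..x, |g s|) / x with hm
  have key : 0 ≤ ∫ s in (0:ℝ)..x, (|g s| - m) ^ 2 :=
    intervalIntegral.integral_nonneg hx (fun s _ => sq_nonneg _)
  have expand : ∫ s in (0:ℝ)..x, (|g s| - m) ^ 2
      = (∫ s in (0:ℝ)..x, (g s) ^ 2) - 2 * m * (∫ s in (0:ℝ)..x, |g s|) + m ^ 2 * x := by
    have e1 : ∀ s, (|g s| - m) ^ 2 = (g s) ^ 2 - (2 * m) * |g s| + m ^ 2 := by
      intro s; rw [← sq_abs (g s)]; ring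
    rw [intervalIntegral.integral_congr (fun s _ => e1 s),
      intervalIntegral.integral_add (isq.sub (iabs.const_mul (2*m))) intervalIntegrable_const,
      intervalIntegral.integral_sub isq (iabs.const_mul (2*m)),
      intervalIntegral.integral_const_mul, intervalIntegral.integral_const]
    simp only [smul_eq_mul, sub_zero]
    ring
  rw [expand] at key
  have hxne : x ≠ 0 := ne_of_gt hxpos
  have hmx : m * x = ∫ s in (0:ℝ)..x, |g s| := by rw [hm, div_mul_cancel₀ _ hxne]
  nlinarith [key, sq_nonneg m]

lemma fubini_tri {h : ℝ → ℝ} (hhm : Measurable h) (hhb : ∀ s ∈ Icc (0:ℝ) 1, |h s| ≤ 1)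
    {x : ℝ} (hx : 0 ≤ x) (hx1 : x ≤ 1) :
    ∫ s in (0:ℝ)..x, (Real.exp (x - s) - 1) * h s = ∫ t in (0:ℝ)..x, Real.exp (x - t) * Γ h t := by
  set T : Set ℝ := Ioc (0:ℝ) x with hT
  set μ : Measure ℝ := volume.restrict T with hμ
  set F : ℝ → ℝ → ℝ := fun s t => Set.indicator (Ioi s) (fun t' => Real.exp (x - t')) t * h s
    with hF
  have hTm : MeasurableSet T := measurableSet_Ioc
  have huncurry : Function.uncurry F =
      Set.indicator {q : ℝ × ℝ | q.1 < q.2} (fun q => Real.exp (x - q.2) * h q.1) := by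
    funext z
    by_cases hz : z.1 < z.2
    · simp [hF, Function.uncurry, Set.indicator, hz, mem_Ioi]
    · simp [hF, Function.uncurry, Set.indicator, hz, mem_Ioi]
  have hFmeas : Measurable (Function.uncurry F) := by
    rw [huncurry]
    exact Measurable.indicator
      ((Real.measurable_exp.comp (measurable_const.sub measurable_snd)).mul (hhm.comp measurable_fst))
      (measurableSet_lt measurable_fst measurable_snd)
  haveI : IsFiniteMeasure μ := by
    constructor
    rw [hμ, Measure.restrict_apply_univ, hT, Real.volume_Ioc]
    exact ENNReal.ofReal_lt_top
  have hInt : Integrable (Function.uncurry F) (μ.prod μ) := by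
    apply Integrable.mono' (integrable_const (3:ℝ)) (hFmeas.aestronglyMeasurable)
    rw [hμ, Measure.prod_restrict]
    filter_upwards [ae_restrict_mem (hTm.prod hTm)] with z hz
    rw [huncurry]
    have hb1 : |h z.1| ≤ 1 := hhb z.1 ⟨hz.1.1.le, hz.1.2.trans hx1⟩
    by_cases hlt : z.1 < z.2
    · rw [Set.indicator_of_mem (by exact hlt)]
      have he : Real.exp (x - z.2) ≤ 3 := exp_le_three (by have := hz.2.1; linarith)
      rw [Real.norm_eq_abs, abs_mul, Real.abs_exp]
      calc Real.exp (x - z.2) * |h z.1| ≤ 3 * 1 :=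
        mul_le_mul he hb1 (abs_nonneg _) (by norm_num)
      _ = 3 := by norm_num
    · rw [Set.indicator_of_notMem (by exact hlt)]
      simp
  have hswap := MeasureTheory.integral_integral_swap hInt
  have hL : ∀ s ∈ T, (∫ t, F s t ∂μ) = (Real.exp (x - s) - 1) * h s := by
    intro s hs
    have : (∫ t, F s t ∂μ) = (∫ t, Set.indicator (Ioi s) (fun t' => Real.exp (x - t')) t ∂μ) * h s :=
      integral_mul_const _ _
    rw [this, hμ, MeasureTheory.integral_indicator measurableSet_Ioi,
      Measure.restrict_restrict measurableSet_Ioi,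
      show Ioi s ∩ T = Ioc s x from by
        rw [hT, Set.inter_comm, Ioc_inter_Ioi, sup_eq_right.2 hs.1.le]]
    rw [← intervalIntegral.integral_of_le hs.2, intervalIntegral.integral_comp_sub_left
      (fun t' => Real.exp t') x]
    simp [integral_exp]
  have hR : ∀ t ∈ T, (∫ s, F s t ∂μ) = Real.exp (x - t) * Γ h t := by
    intro t ht
    have hfun : (fun s => F s t) = Set.indicator (Iio t) (fun s => Real.exp (x - t) * h s) := by
      funext s
      by_cases hst : s < t
      · simp [hF, Set.indicator, hst, mem_Ioi, mem_Iio]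
      · simp [hF, Set.indicator, hst, mem_Ioi, mem_Iio]
    rw [hfun, hμ, MeasureTheory.integral_indicator measurableSet_Iio,
      Measure.restrict_restrict measurableSet_Iio,
      show Iio t ∩ T = Ioo 0 t from by
        rw [hT]; ext s'
        simp only [mem_inter_iff, mem_Iio, mem_Ioc, mem_Ioo]
        constructor
        · rintro ⟨h1, h2, h3⟩; exact ⟨h2, h1⟩
        · rintro ⟨h1, h2⟩; exact ⟨h2, h1, le_trans h2.le ht.2⟩,
      MeasureTheory.integral_const_mul, ← MeasureTheory.integral_Ioc_eq_integral_Ioo,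
      ← intervalIntegral.integral_of_le ht.1.le]
    rfl
  calc ∫ s in (0:ℝ)..x, (Real.exp (x - s) - 1) * h s
      = ∫ s in T, (Real.exp (x - s) - 1) * h s := intervalIntegral.integral_of_le hx
    _ = ∫ s, (∫ t, F s t ∂μ) ∂μ := (setIntegral_congr_fun hTm (fun s hs => hL s hs)).symm
    _ = ∫ t, (∫ s, F s t ∂μ) ∂μ := hswap
    _ = ∫ t in T, Real.exp (x - t) * Γ h t := setIntegral_congr_fun hTm (fun t ht => hR t ht)
    _ = ∫ t in (0:ℝ)..x, Real.exp (x - t) * Γ h t := (intervalIntegral.integral_of_le hx).symm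

set_option maxHeartbeats 2000000 in
/-- Stability condition (8) of Assumption 3(b) with r' = 1 for the SemiPDE model of
Example 3, with true parameter θ₀ = (1, 2) and true nonparametric component f₀. -/
theorem stability_condition (f₀ : ℝ → ℝ) (hf₀m : Measurable f₀)
    (hf₀r : ∀ s ∈ Set.Icc (0:ℝ) 1, f₀ s ∈ Set.Icc (1:ℝ) 2) :
    ∃ c : ℝ, 0 < c ∧
      ∀ β ∈ Set.Icc (0:ℝ) 2,
        ∀ f : ℝ → ℝ, Measurable f →
          (∀ s ∈ Set.Icc (0:ℝ) 1, f s ∈ Set.Icc (1:ℝ) 2) →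
          (L2v (fun x => u β f x - u 1 f₀ x)) ^ 2 ≥
            c * (|β - 1| ^ 2 + (L2 (Γ (fun x => f x - f₀ x))) ^ 2) := by
  refine ⟨1 / 10 ^ 22, by norm_num, ?_⟩
  rintro β ⟨hβ0, hβ2⟩ f hfm hfr
  have hf₀b : ∀ s ∈ Icc (0:ℝ) 1, |f₀ s| ≤ 2 := fun s hs =>
    abs_le.2 ⟨by linarith [(hf₀r s hs).1], (hf₀r s hs).2⟩
  have hfb : ∀ s ∈ Icc (0:ℝ) 1, |f s| ≤ 2 := fun s hs =>
    abs_le.2 ⟨by linarith [(hfr s hs).1], (hfr s hs).2⟩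
  set h : ℝ → ℝ := fun s => f s - f₀ s with hhdef
  have hhm : Measurable h := hfm.sub hf₀m
  have hhb : ∀ s ∈ Icc (0:ℝ) 1, |h s| ≤ 1 := by
    intro s hs
    show |f s - f₀ s| ≤ 1
    exact abs_le.2 ⟨by linarith [(hfr s hs).1, (hf₀r s hs).2],
      by linarith [(hfr s hs).2, (hf₀r s hs).1]⟩
  set p : ℝ → ℝ := Γ h with hpdef
  set q : ℝ → ℝ := fun y => ∫ s in (0:ℝ)..y, Real.exp (-s) * h s with hqdef
  -- continuity of the primitives
  have hpc : ContinuousOn p (Icc 0 1) := by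
    have hint : IntegrableOn h (uIcc (0:ℝ) 1) volume := by
      rw [uIcc_of_le zero_le_one]; exact IIcc hhm hhb
    have := intervalIntegral.continuousOn_primitive_interval hint
    rwa [uIcc_of_le zero_le_one] at this
  have hqc : ContinuousOn q (Icc 0 1) := by
    have hint : IntegrableOn (fun s => Real.exp (-s) * h s) (uIcc (0:ℝ) 1) volume := by
      rw [uIcc_of_le zero_le_one]
      have hmeas : Measurable (fun s => Real.exp (-s) * h s) :=
        (Real.measurable_exp.comp measurable_neg).mul hhm
      apply IIcc hmeas (C := 1)
      intro s hs
      rw [abs_mul, Real.abs_exp]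
      have h1 : Real.exp (-s) ≤ 1 := by
        calc Real.exp (-s) ≤ Real.exp 0 := Real.exp_le_exp.2 (by linarith [hs.1])
        _ = 1 := Real.exp_zero
      calc Real.exp (-s) * |h s| ≤ 1 * 1 := mul_le_mul h1 (hhb s hs) (abs_nonneg _) zero_le_one
      _ = 1 := by norm_num
    have := intervalIntegral.continuousOn_primitive_interval hint
    rwa [uIcc_of_le zero_le_one] at this
  -- abs bounds on parameters
  have hβ4 : |β| ≤ 4 := abs_le.2 ⟨by linarith, by linarith⟩
  have h2β4 : |2 * β| ≤ 4 := abs_le.2 ⟨by linarith, by linarith⟩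
  have h14 : |(1:ℝ)| ≤ 4 := by norm_num
  have h24 : |(2:ℝ)| ≤ 4 := by norm_num
  -- continuity of v's
  have hvβf : ContinuousOn (v β f) (Icc 0 1) :=
    v_cont_s3 hfm (abs_le.2 ⟨by linarith, by linarith⟩) hfb
  have hv2βf : ContinuousOn (v (2*β) f) (Icc 0 1) :=
    v_cont_s3 hfm (abs_le.2 ⟨by linarith, by linarith⟩) hfb
  have hv1f : ContinuousOn (v 1 f) (Icc 0 1) := v_cont_s3 hfm (by norm_num) hfb
  have hv2f : ContinuousOn (v 2 f) (Icc 0 1) := v_cont_s3 hfm (by norm_num) hfb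
  have hv1f₀ : ContinuousOn (v 1 f₀) (Icc 0 1) := v_cont_s3 hf₀m (by norm_num) hf₀b
  have hv2f₀ : ContinuousOn (v 2 f₀) (Icc 0 1) := v_cont_s3 hf₀m (by norm_num) hf₀b
  -- main objects
  set A : ℝ → ℝ := fun x => v β f x - v 1 f x with hAdef
  set W : ℝ → ℝ := fun x => v (2*β) f x - v 2 f x - (v β f x - v 1 f x) with hWdef
  set ρ : ℝ → ℝ := fun x => Real.exp (2*x) * q x - Real.exp x * p x with hρdef
  set D₁ : ℝ → ℝ := fun x => v β f x - v 1 f₀ x with hD1def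
  set D₂ : ℝ → ℝ := fun x => v (2*β) f x - v 2 f₀ x with hD2def
  have hAc : ContinuousOn A (Icc 0 1) := hvβf.sub hv1f
  have hWc : ContinuousOn W (Icc 0 1) := (hv2βf.sub hv2f).sub (hvβf.sub hv1f)
  have hρc : ContinuousOn ρ (Icc 0 1) := by
    apply ContinuousOn.sub
    · exact ((Real.continuous_exp.comp (continuous_const.mul continuous_id)).continuousOn).mul hqc
    · exact (Real.continuous_exp.continuousOn).mul hpc
  have hD1c : ContinuousOn D₁ (Icc 0 1) := hvβf.sub hv1f₀
  have hD2c : ContinuousOn D₂ (Icc 0 1) := hv2βf.sub hv2f₀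
  -- identities
  have id1 : ∀ x, 0 ≤ x → x ≤ 1 → v 1 f x - v 1 f₀ x = Real.exp x * p x := by
    intro x hx hx1
    rw [v, v, ← intervalIntegral.integral_sub (IIv hfm h14 hx hx1 hfb) (IIv hf₀m h14 hx hx1 hf₀b),
      hpdef, Γ, ← intervalIntegral.integral_const_mul]
    apply intervalIntegral.integral_congr
    intro s _
    show Real.exp (1*(x-s)) * Real.exp s * f s - Real.exp (1*(x-s)) * Real.exp s * f₀ s
      = Real.exp x * h s
    rw [hhdef, ← Real.exp_add, show 1*(x-s) + s = x from by ring]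
    ring
  have id2 : ∀ x, 0 ≤ x → x ≤ 1 → v 2 f x - v 2 f₀ x = Real.exp (2*x) * q x := by
    intro x hx hx1
    rw [v, v, ← intervalIntegral.integral_sub (IIv hfm h24 hx hx1 hfb) (IIv hf₀m h24 hx hx1 hf₀b),
      hqdef, ← intervalIntegral.integral_const_mul]
    apply intervalIntegral.integral_congr
    intro s _
    show Real.exp (2*(x-s)) * Real.exp s * f s - Real.exp (2*(x-s)) * Real.exp s * f₀ s
      = Real.exp (2*x) * (Real.exp (-s) * h s)
    rw [hhdef, ← mul_assoc, ← Real.exp_add, ← Real.exp_add,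
      show 2*(x-s) + s = 2*x + -s from by ring]
    ring
  have idD1 : ∀ x, 0 ≤ x → x ≤ 1 → D₁ x = A x + Real.exp x * p x := by
    intro x hx hx1
    have := id1 x hx hx1
    rw [hD1def, hAdef]
    dsimp only
    linarith
  have idD21 : ∀ x, 0 ≤ x → x ≤ 1 → D₂ x - D₁ x = W x + ρ x := by
    intro x hx hx1
    have h1 := id1 x hx hx1
    have h2 := id2 x hx hx1
    rw [hD1def, hD2def, hWdef, hρdef]
    dsimp only
    linarith
  -- W as a single integral
  have hWeq : ∀ x, 0 ≤ x → x ≤ 1 → W x = ∫ s in (0:ℝ)..x,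
      (Real.exp (β*(x-s)) - Real.exp (x-s)) * (Real.exp (β*(x-s)) + Real.exp (x-s) - 1)
        * (Real.exp s * f s) := by
    intro x hx hx1
    have i2β := IIv hfm h2β4 hx hx1 hfb
    have i2 := IIv hfm h24 hx hx1 hfb
    have iβ := IIv hfm hβ4 hx hx1 hfb
    have i1 := IIv hfm h14 hx hx1 hfb
    rw [hWdef]
    dsimp only
    rw [v, v, v, v, ← intervalIntegral.integral_sub i2β i2,
      ← intervalIntegral.integral_sub iβ i1,
      ← intervalIntegral.integral_sub (i2β.sub i2) (iβ.sub i1)]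
    apply intervalIntegral.integral_congr
    intro s _
    dsimp only
    rw [show 2*β*(x-s) = β*(x-s) + β*(x-s) from by ring,
      show (2:ℝ)*(x-s) = (x-s) + (x-s) from by ring, Real.exp_add, Real.exp_add, one_mul]
    ring
  -- integrability of the W integrand
  have hWint : ∀ x, 0 ≤ x → x ≤ 1 → IntervalIntegrable (fun s =>
      (Real.exp (β*(x-s)) - Real.exp (x-s)) * (Real.exp (β*(x-s)) + Real.exp (x-s) - 1)
        * (Real.exp s * f s)) volume 0 x := by
    intro x hx hx1
    apply II ((((measE β x).sub (measE1 x)).mul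
      (((measE β x).add (measE1 x)).sub measurable_const)).mul (Real.measurable_exp.mul hfm))
      (C := 42840) _ hx hx1
    intro s hs
    have hy : |x - s| ≤ 1 := by rw [abs_le]; constructor <;> [linarith [hs.2, hx]; linarith [hs.1, hx1]]
    have ha : Real.exp (β*(x-s)) ≤ 81 := expb hβ4 hy
    have hb' : Real.exp (x-s) ≤ 3 := exp_le_three (by linarith [hs.1, hx1])
    have hap := Real.exp_pos (β*(x-s))
    have hbp := Real.exp_pos (x-s)
    have h1 : |Real.exp (β*(x-s)) - Real.exp (x-s)| ≤ 84 := abs_le.2 ⟨by linarith, by linarith⟩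
    have h2 : |Real.exp (β*(x-s)) + Real.exp (x-s) - 1| ≤ 85 := abs_le.2 ⟨by linarith, by linarith⟩
    have h3 : |Real.exp s * f s| ≤ 6 := by
      rw [abs_mul, Real.abs_exp]
      calc Real.exp s * |f s| ≤ 3 * 2 := by
            exact mul_le_mul (exp_le_three hs.2) (hfb s hs) (abs_nonneg _) (by norm_num)
      _ = 6 := by norm_num
    simp only [Pi.mul_apply, Pi.sub_apply, Pi.add_apply]
    rw [abs_mul, abs_mul]
    calc |Real.exp (β*(x-s)) - Real.exp (x-s)| * |Real.exp (β*(x-s)) + Real.exp (x-s) - 1|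
          * |Real.exp s * f s| ≤ 84 * 85 * 6 := by
            exact mul_le_mul (mul_le_mul h1 h2 (abs_nonneg _) (by norm_num)) h3 (abs_nonneg _)
              (by positivity)
    _ = 42840 := by norm_num
  -- lower bound for W²
  have hWlow : ∀ x, 0 ≤ x → x ≤ 1 → ((β-1)^2/4) * x^4 ≤ (W x)^2 := by
    intro x hx hx1
    have ilin : IntervalIntegrable (fun s => (β-1)*(x-s)) volume 0 x :=
      ((continuous_const.mul (continuous_const.sub continuous_id)).intervalIntegrable 0 x)
    have ilineq : ∫ s in (0:ℝ)..x, (β-1)*(x-s) = (β-1)*(x^2/2) := by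
      rw [intervalIntegral.integral_const_mul, integral_x_sub]
    rcases le_total 1 β with hb1 | hb1
    · have hpt : ∀ s ∈ Icc (0:ℝ) x, (β-1)*(x-s) ≤
          (Real.exp (β*(x-s)) - Real.exp (x-s)) * (Real.exp (β*(x-s)) + Real.exp (x-s) - 1)
            * (Real.exp s * f s) := by
        intro s hs
        have ht0 : (0:ℝ) ≤ x - s := by linarith [hs.2]
        have e1 := expdiff_ge hb1 ht0
        have e2 : 1 ≤ Real.exp (β*(x-s)) + Real.exp (x-s) - 1 := by
          have := Real.one_le_exp (mul_nonneg hβ0 ht0)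
          have := Real.one_le_exp ht0
          linarith
        have e3 : 1 ≤ Real.exp s * f s := by
          have hfs : 1 ≤ f s := (hfr s ⟨hs.1, le_trans hs.2 hx1⟩).1
          have := Real.one_le_exp hs.1
          nlinarith
        have ha0 : 0 ≤ Real.exp (β*(x-s)) - Real.exp (x-s) :=
          le_trans (mul_nonneg (by linarith) ht0) e1
        have hab : Real.exp (β*(x-s)) - Real.exp (x-s) ≤
            (Real.exp (β*(x-s)) - Real.exp (x-s)) * (Real.exp (β*(x-s)) + Real.exp (x-s) - 1) :=
          le_mul_of_one_le_right ha0 e2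
        have habc : (Real.exp (β*(x-s)) - Real.exp (x-s)) * (Real.exp (β*(x-s)) + Real.exp (x-s) - 1)
            ≤ (Real.exp (β*(x-s)) - Real.exp (x-s)) * (Real.exp (β*(x-s)) + Real.exp (x-s) - 1)
              * (Real.exp s * f s) :=
          le_mul_of_one_le_right (mul_nonneg ha0 (by linarith)) e3
        linarith
      have hmono := intervalIntegral.integral_mono_on hx ilin (hWint x hx hx1) hpt
      rw [ilineq, ← hWeq x hx hx1] at hmono
      have hnn : 0 ≤ (β-1)*(x^2/2) := mul_nonneg (by linarith) (by positivity)
      nlinarith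
    · have hpt : ∀ s ∈ Icc (0:ℝ) x,
          (Real.exp (β*(x-s)) - Real.exp (x-s)) * (Real.exp (β*(x-s)) + Real.exp (x-s) - 1)
            * (Real.exp s * f s) ≤ (β-1)*(x-s) := by
        intro s hs
        have ht0 : (0:ℝ) ≤ x - s := by linarith [hs.2]
        have e1 := expdiff_le2 hβ0 hb1 ht0
        have e2 : 1 ≤ Real.exp (β*(x-s)) + Real.exp (x-s) - 1 := by
          have := Real.one_le_exp (mul_nonneg hβ0 ht0)
          have := Real.one_le_exp ht0
          linarith
        have e3 : 1 ≤ Real.exp s * f s := by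
          have hfs : 1 ≤ f s := (hfr s ⟨hs.1, le_trans hs.2 hx1⟩).1
          have := Real.one_le_exp hs.1
          nlinarith
        have ha0 : Real.exp (β*(x-s)) - Real.exp (x-s) ≤ 0 := by
          have : (β-1)*(x-s) ≤ 0 := mul_nonpos_of_nonpos_of_nonneg (by linarith) ht0
          linarith
        have hab : (Real.exp (β*(x-s)) - Real.exp (x-s)) * (Real.exp (β*(x-s)) + Real.exp (x-s) - 1)
            ≤ Real.exp (β*(x-s)) - Real.exp (x-s) := by nlinarith
        have habc : (Real.exp (β*(x-s)) - Real.exp (x-s)) * (Real.exp (β*(x-s)) + Real.exp (x-s) - 1)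
              * (Real.exp s * f s)
            ≤ (Real.exp (β*(x-s)) - Real.exp (x-s)) * (Real.exp (β*(x-s)) + Real.exp (x-s) - 1) := by
          nlinarith [mul_nonpos_of_nonpos_of_nonneg ha0 (by linarith : (0:ℝ) ≤ Real.exp (β*(x-s)) + Real.exp (x-s) - 1)]
        linarith
      have hmono := intervalIntegral.integral_mono_on hx (hWint x hx hx1) ilin hpt
      rw [ilineq, ← hWeq x hx hx1] at hmono
      have hnn : (β-1)*(x^2/2) ≤ 0 := mul_nonpos_of_nonpos_of_nonneg (by linarith) (by positivity)
      nlinarith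
  -- bound on A
  have hAbound : ∀ x, 0 ≤ x → x ≤ 1 → |A x| ≤ 54 * |β-1| * x^2 := by
    intro x hx hx1
    have iβ := IIv hfm hβ4 hx hx1 hfb
    have i1 := IIv hfm h14 hx hx1 hfb
    have hAint : A x = ∫ s in (0:ℝ)..x,
        (Real.exp (β*(x-s)) * Real.exp s * f s - Real.exp (1*(x-s)) * Real.exp s * f s) := by
      rw [hAdef]
      dsimp only
      rw [v, v, intervalIntegral.integral_sub iβ i1]
    rw [hAint]
    have hbnd : ∀ s ∈ Set.uIoc (0:ℝ) x,
        ‖Real.exp (β*(x-s)) * Real.exp s * f s - Real.exp (1*(x-s)) * Real.exp s * f s‖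
          ≤ 54 * |β-1| * x := by
      intro s hs
      rw [Set.uIoc_of_le hx] at hs
      have hs0 : 0 ≤ s := hs.1.le
      have hsx : s ≤ x := hs.2
      have ht0 : 0 ≤ x - s := by linarith
      have ht1 : x - s ≤ 1 := by linarith
      rw [Real.norm_eq_abs, show Real.exp (β*(x-s)) * Real.exp s * f s
          - Real.exp (1*(x-s)) * Real.exp s * f s
          = (Real.exp (β*(x-s)) - Real.exp (x-s)) * (Real.exp s * f s) from by rw [one_mul]; ring,
        abs_mul]
      have h1 := expdiff_abs_le hβ0 hβ2 ht0 ht1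
      have h2 : |Real.exp s * f s| ≤ 6 := by
        rw [abs_mul, Real.abs_exp]
        calc Real.exp s * |f s| ≤ 3 * 2 := by
              exact mul_le_mul (exp_le_three (le_trans hsx hx1)) (hfb s ⟨hs0, le_trans hsx hx1⟩)
                (abs_nonneg _) (by norm_num)
        _ = 6 := by norm_num
      calc |Real.exp (β*(x-s)) - Real.exp (x-s)| * |Real.exp s * f s|
          ≤ (9 * |β-1| * (x-s)) * 6 := by
            exact mul_le_mul h1 h2 (abs_nonneg _) (by positivity)
      _ ≤ 54 * |β-1| * x := by nlinarith [abs_nonneg (β-1)]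
    have := intervalIntegral.norm_integral_le_of_norm_le_const hbnd
    rw [Real.norm_eq_abs] at this
    calc |∫ s in (0:ℝ)..x,
        (Real.exp (β*(x-s)) * Real.exp s * f s - Real.exp (1*(x-s)) * Real.exp s * f s)|
        ≤ 54 * |β-1| * x * |x - 0| := this
    _ = 54 * |β-1| * x^2 := by rw [sub_zero, abs_of_nonneg hx]; ring
  -- bound on ρ²
  have hρbound : ∀ x, 0 ≤ x → x ≤ 1 → (ρ x)^2 ≤ 81 * x * ∫ t in (0:ℝ)..x, (p t)^2 := by
    intro x hx hx1
    have iexh : IntervalIntegrable (fun s => Real.exp (x - s) * h s) volume 0 x := by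
      apply II ((measE1 x).mul hhm) (C := 3) _ hx hx1
      intro s hs
      simp only [Pi.mul_apply]
      rw [abs_mul, Real.abs_exp]
      calc Real.exp (x - s) * |h s| ≤ 3 * 1 :=
        mul_le_mul (exp_le_three (by linarith [hs.1])) (hhb s hs) (abs_nonneg _) (by norm_num)
      _ = 3 := by norm_num
    have ih : IntervalIntegrable h volume 0 x := II hhm hhb hx hx1
    have e1 : ∫ s in (0:ℝ)..x, (Real.exp (x-s) - 1) * h s = Real.exp x * q x - p x := by
      rw [intervalIntegral.integral_congr
          (g := fun s => Real.exp (x-s) * h s - h s) (fun s _ => by dsimp only; ring),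
        intervalIntegral.integral_sub iexh ih]
      congr 1
      rw [hqdef, ← intervalIntegral.integral_const_mul]
      apply intervalIntegral.integral_congr
      intro s _
      show Real.exp (x - s) * h s = Real.exp x * (Real.exp (-s) * h s)
      rw [← mul_assoc, ← Real.exp_add, show x + -s = x - s from by ring]
    have e2 := fubini_tri hhm hhb hx hx1
    rw [← hpdef] at e2
    have e3 : ρ x = Real.exp x * ∫ t in (0:ℝ)..x, Real.exp (x - t) * p t := by
      rw [hρdef]
      dsimp only
      rw [← e2, e1, show (2:ℝ)*x = x + x from by ring, Real.exp_add]
      ring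
    have hpcx : ContinuousOn p (uIcc 0 x) := hpc.mono (by
      rw [uIcc_of_le hx]; exact Icc_subset_Icc le_rfl hx1)
    have int1 : IntervalIntegrable (fun t => |Real.exp (x - t) * p t|) volume 0 x :=
      (((Real.continuous_exp.comp (continuous_const.sub continuous_id)).continuousOn.mul
        hpcx).abs).intervalIntegrable
    have int2 : IntervalIntegrable (fun t => 3 * |p t|) volume 0 x :=
      (hpcx.abs.intervalIntegrable).const_mul 3
    have e4 : |∫ t in (0:ℝ)..x, Real.exp (x-t) * p t| ≤ ∫ t in (0:ℝ)..x, 3 * |p t| := by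
      calc |∫ t in (0:ℝ)..x, Real.exp (x-t) * p t|
          ≤ ∫ t in (0:ℝ)..x, |Real.exp (x-t) * p t| :=
            intervalIntegral.abs_integral_le_integral_abs hx
      _ ≤ ∫ t in (0:ℝ)..x, 3 * |p t| := by
          apply intervalIntegral.integral_mono_on hx int1 int2
          intro t ht
          rw [abs_mul, Real.abs_exp]
          exact mul_le_mul_of_nonneg_right (exp_le_three (by linarith [ht.1])) (abs_nonneg _)
    have e5 : ∫ t in (0:ℝ)..x, 3 * |p t| = 3 * ∫ t in (0:ℝ)..x, |p t| :=
      intervalIntegral.integral_const_mul _ _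
    have e6 : (∫ t in (0:ℝ)..x, |p t|)^2 ≤ x * ∫ t in (0:ℝ)..x, (p t)^2 := CS_s3 hpc hx hx1
    have hIp : 0 ≤ ∫ t in (0:ℝ)..x, |p t| :=
      intervalIntegral.integral_nonneg hx (fun t _ => abs_nonneg _)
    have e7 : |ρ x| ≤ 9 * ∫ t in (0:ℝ)..x, |p t| := by
      rw [e3, abs_mul, Real.abs_exp]
      calc Real.exp x * |∫ t in (0:ℝ)..x, Real.exp (x-t) * p t|
          ≤ 3 * (3 * ∫ t in (0:ℝ)..x, |p t|) := by
            exact mul_le_mul (exp_le_three hx1) (le_trans e4 (le_of_eq e5)) (abs_nonneg _)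
              (by norm_num)
      _ = 9 * ∫ t in (0:ℝ)..x, |p t| := by ring
    have h8 : (ρ x)^2 ≤ 81 * (∫ t in (0:ℝ)..x, |p t|)^2 := by
      calc (ρ x)^2 = |ρ x|^2 := (sq_abs _).symm
      _ ≤ (9 * ∫ t in (0:ℝ)..x, |p t|)^2 := by
            exact pow_le_pow_left₀ (abs_nonneg _) e7 2
      _ = 81 * (∫ t in (0:ℝ)..x, |p t|)^2 := by ring
    have h9 : 81 * (∫ t in (0:ℝ)..x, |p t|)^2 ≤ 81 * (x * ∫ t in (0:ℝ)..x, (p t)^2) :=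
      mul_le_mul_of_nonneg_left e6 (by norm_num)
    linarith
  -- squared quantity inequalities
  have hpsq : ∀ x, 0 ≤ x → x ≤ 1 →
      (p x)^2 ≤ 2*((D₁ x)^2 + (D₂ x)^2) + 5832*(β-1)^2*x^4 := by
    intro x hx hx1
    have heq : Real.exp x * p x = D₁ x - A x := by
      have := idD1 x hx hx1; linarith
    have hsqeq : (Real.exp x * p x)^2 = (D₁ x - A x)^2 := by rw [heq]
    have he2 : 1 ≤ Real.exp x * Real.exp x := by
      nlinarith [Real.one_le_exp hx]
    have hA := hAbound x hx hx1
    have hA2 : (A x)^2 ≤ 2916*(β-1)^2*x^4 := by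
      have hmm := mul_self_le_mul_self (abs_nonneg (A x)) hA
      calc (A x)^2 = |A x| * |A x| := by rw [abs_mul_abs_self]; ring
      _ ≤ (54 * |β-1| * x^2) * (54 * |β-1| * x^2) := hmm
      _ = 2916 * (|β-1| * |β-1|) * x^4 := by ring
      _ = 2916*(β-1)^2*x^4 := by rw [abs_mul_abs_self]; ring
    nlinarith [hsqeq, he2, sq_nonneg (p x), sq_nonneg (D₁ x + A x), sq_nonneg (D₂ x)]
  -- abbreviations for the integrals
  set S := ∫ x in (0:ℝ)..1, ((D₁ x)^2 + (D₂ x)^2) with hSdef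
  set Q := ∫ x in (0:ℝ)..1, (p x)^2 with hQdef
  set P := ∫ x in (0:ℝ)..(1/2000 : ℝ), (p x)^2 with hPdef
  set RR := ∫ x in (0:ℝ)..(1/2000 : ℝ), (ρ x)^2 with hRdef
  set WW := ∫ x in (0:ℝ)..(1/2000 : ℝ), (W x)^2 with hWWdef
  have hc0 : (0:ℝ) ≤ 1/2000 := by norm_num
  have hc1 : (1/2000 : ℝ) ≤ 1 := by norm_num
  have hci : ∀ {g : ℝ → ℝ}, ContinuousOn g (Icc 0 1) → ∀ {a b : ℝ}, 0 ≤ a → a ≤ b → b ≤ 1 →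
      IntervalIntegrable g volume a b := by
    intro g hg a b ha hab hb1
    exact (hg.mono (by rw [uIcc_of_le hab]; exact Icc_subset_Icc ha hb1)).intervalIntegrable
  have hS0 : 0 ≤ S :=
    intervalIntegral.integral_nonneg zero_le_one (fun x _ => by positivity)
  have hQ0 : 0 ≤ Q :=
    intervalIntegral.integral_nonneg zero_le_one (fun x _ => by positivity)
  have hP0 : 0 ≤ P :=
    intervalIntegral.integral_nonneg hc0 (fun x _ => by positivity)
  -- E3 : lower bound on WW
  have E3 : ((β-1)^2/4) * ((1/2000:ℝ)^5/5) ≤ WW := by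
    have comp := intervalIntegral.integral_mono_on hc0
      ((continuous_const.mul (continuous_pow 4)).intervalIntegrable 0 (1/2000))
      (hci (hWc.pow 2) le_rfl hc0 hc1)
      (fun x hx => hWlow x hx.1 (le_trans hx.2 hc1))
    have lhs_eq : ∫ x in (0:ℝ)..(1/2000:ℝ), ((β-1)^2/4) * x^4
        = ((β-1)^2/4) * ((1/2000:ℝ)^5/5) := by
      rw [intervalIntegral.integral_const_mul, integral_pow]
      norm_num
    simp only [Pi.mul_apply, Pi.pow_apply] at comp
    rw [lhs_eq] at comp
    exact comp
  -- E4 : upper bound on WW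
  have E4 : WW ≤ 4*S + 2*RR := by
    have ptw : ∀ x ∈ Icc (0:ℝ) (1/2000:ℝ),
        (W x)^2 ≤ 4*((D₁ x)^2 + (D₂ x)^2) + 2*(ρ x)^2 := by
      intro x hx
      have hW : W x = (D₂ x - D₁ x) - ρ x := by
        have := idD21 x hx.1 (le_trans hx.2 hc1); linarith
      rw [hW]
      nlinarith [sq_nonneg (D₂ x - D₁ x + ρ x), sq_nonneg (D₂ x + D₁ x)]
    have icomb : IntervalIntegrable (fun x => 4*((D₁ x)^2 + (D₂ x)^2) + 2*(ρ x)^2)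
        volume 0 (1/2000:ℝ) :=
      hci ((continuousOn_const.mul ((hD1c.pow 2).add (hD2c.pow 2))).add
        (continuousOn_const.mul (hρc.pow 2))) le_rfl hc0 hc1
    have comp := intervalIntegral.integral_mono_on hc0
      (hci (hWc.pow 2) le_rfl hc0 hc1) icomb ptw
    simp only [Pi.pow_apply] at comp
    have split : ∫ x in (0:ℝ)..(1/2000:ℝ), (4*((D₁ x)^2 + (D₂ x)^2) + 2*(ρ x)^2)
        = 4*(∫ x in (0:ℝ)..(1/2000:ℝ), ((D₁ x)^2 + (D₂ x)^2)) + 2*RR := by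
      rw [intervalIntegral.integral_add (f := fun x => 4*((D₁ x)^2 + (D₂ x)^2)) (g := fun x => 2*(ρ x)^2)
          ((hci ((hD1c.pow 2).add (hD2c.pow 2)) le_rfl hc0 hc1).const_mul 4)
          ((hci (hρc.pow 2) le_rfl hc0 hc1).const_mul 2),
        intervalIntegral.integral_const_mul, intervalIntegral.integral_const_mul]
    have hup : ∫ x in (0:ℝ)..(1/2000:ℝ), ((D₁ x)^2 + (D₂ x)^2) ≤ S :=
      mono_upper (g := fun y => (D₁ y)^2 + (D₂ y)^2) ((hD1c.pow 2).add (hD2c.pow 2)) (fun y _ => by positivity) hc0 hc1 le_rfl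
    rw [split] at comp
    linarith
  -- E2 : upper bound on RR
  have E2 : RR ≤ (81*P) * ((1/2000:ℝ)^2/2) := by
    have ptw : ∀ x ∈ Icc (0:ℝ) (1/2000:ℝ), (ρ x)^2 ≤ (81*P) * x := by
      intro x hx
      have h1 := hρbound x hx.1 (le_trans hx.2 hc1)
      have h2 : ∫ t in (0:ℝ)..x, (p t)^2 ≤ P :=
        mono_upper (g := fun y => (p y)^2) (hpc.pow 2) (fun y _ => by positivity) hx.1 hx.2 hc1
      nlinarith [hx.1]
    have hlin : Continuous (fun x : ℝ => (81*P) * x) := continuous_const.mul continuous_id'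
    have comp := intervalIntegral.integral_mono_on hc0
      (hci (hρc.pow 2) le_rfl hc0 hc1)
      (hlin.intervalIntegrable 0 (1/2000)) ptw
    have lhs_eq : ∫ x in (0:ℝ)..(1/2000:ℝ), (81*P) * x = (81*P) * ((1/2000:ℝ)^2/2) := by
      rw [intervalIntegral.integral_const_mul, integral_id]
      norm_num
    rw [lhs_eq] at comp
    exact comp
  -- E5, E6 : bounds on P and Q
  have hPQ : ∀ b : ℝ, 0 ≤ b → b ≤ 1 → ∫ x in (0:ℝ)..b, (p x)^2
      ≤ 2*S + 5832*(β-1)^2*(b^5/5) := by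
    intro b hb hb1
    have icomb : IntervalIntegrable (fun x => 2*((D₁ x)^2 + (D₂ x)^2) + 5832*(β-1)^2*x^4)
        volume 0 b :=
      (hci ((hD1c.pow 2).add (hD2c.pow 2)) le_rfl hb hb1).const_mul 2 |>.add
        (((continuous_const.mul (continuous_pow 4)).intervalIntegrable 0 b))
    have comp := intervalIntegral.integral_mono_on hb
      (hci (hpc.pow 2) le_rfl hb hb1) icomb
      (fun x hx => hpsq x hx.1 (le_trans hx.2 hb1))
    simp only [Pi.pow_apply] at comp
    have split : ∫ x in (0:ℝ)..b, (2*((D₁ x)^2 + (D₂ x)^2) + 5832*(β-1)^2*x^4)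
        = 2*(∫ x in (0:ℝ)..b, ((D₁ x)^2 + (D₂ x)^2)) + 5832*(β-1)^2*(b^5/5) := by
      rw [intervalIntegral.integral_add (f := fun x => 2*((D₁ x)^2 + (D₂ x)^2)) (g := fun x => 5832*(β-1)^2*x^4)
          ((hci ((hD1c.pow 2).add (hD2c.pow 2)) le_rfl hb hb1).const_mul 2)
          ((continuous_const.mul (continuous_pow 4)).intervalIntegrable 0 b),
        intervalIntegral.integral_const_mul, intervalIntegral.integral_const_mul, integral_pow]
      norm_num
    have hup : ∫ x in (0:ℝ)..b, ((D₁ x)^2 + (D₂ x)^2) ≤ S :=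
      mono_upper (g := fun y => (D₁ y)^2 + (D₂ y)^2) ((hD1c.pow 2).add (hD2c.pow 2)) (fun y _ => by positivity) hb hb1 le_rfl
    rw [split] at comp
    linarith
  have E5 : P ≤ 2*S + 5832*(β-1)^2*((1/2000:ℝ)^5/5) := hPQ (1/2000) hc0 hc1
  have E6 : Q ≤ 2*S + 5832*(β-1)^2*(1/5) := by
    have := hPQ 1 zero_le_one le_rfl
    norm_num at this
    linarith
  -- final numeric combination
  norm_num at E3 E2 E5
  have hfinal : (β-1)^2 + Q ≤ 10^22 * S := by nlinarith [E3, E4, E2, E5, E6, hS0, hP0, sq_nonneg (β-1)]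
  -- rewrite the goal
  have hL2v : (L2v (fun x => u β f x - u 1 f₀ x))^2 = S := by
    rw [L2v, Real.sq_sqrt]
    · apply intervalIntegral.integral_congr
      intro x _
      simp only [u, Prod.mk_sub_mk, hD1def, hD2def]
      norm_num
    · apply intervalIntegral.integral_nonneg zero_le_one
      intro x _
      positivity
  have hL2Q : (L2 p)^2 = Q := by
    rw [L2, Real.sq_sqrt]
    apply intervalIntegral.integral_nonneg zero_le_one
    intro x _
    positivity
  rw [ge_iff_le, hL2v, hL2Q, sq_abs]
  nlinarith [hfinal, hS0, hQ0, sq_nonneg (β-1)]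
end

section
/- For every β ∈ [0,2], every measurable f : [0,1] → [1,2], and every x ∈ [0,1], one has g(x; β, f) ≥ x²/2, where g(x; b, f) = ∫_0^x (x−s) e^{b(x−s)} e^s f(s) ds is the partial derivative of v(x; ·, f) at b. Consequently ‖∂_β u(·; β, f)‖_{L²} ≥ ‖g(·; β, f)‖_{L²} ≥ 1/(2√5) > 0, where ∂_β u(x; β, f) = (g(x; β, f), 2 g(x; 2β, f)); hence the sensitivity condition of Assumption 3(c) holds for the SemiPDE model of Example 3 with C_θ = 1/(2√5). -/
open MeasureTheory Set

/-- `g(x; b, f) = ∫_0^x (x−s) e^{b(x−s)} e^s f(s) ds`, the partial derivative of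
`v(x; ·, f)` at `b`. -/
noncomputable def gDeriv (b : ℝ) (f : ℝ → ℝ) (x : ℝ) : ℝ :=
  ∫ s in (0:ℝ)..x, (x - s) * Real.exp (b * (x - s)) * Real.exp s * f s

/-- A product of a continuous function and a bounded measurable function is interval
integrable on any interval. -/
lemma contMul_intervalIntegrable {g f : ℝ → ℝ} (hg : Continuous g) (hf : Measurable f)
    (hbd : ∀ s, |f s| ≤ 2) (a c : ℝ) :
    IntervalIntegrable (fun s => g s * f s) volume a c := by
  rw [intervalIntegrable_iff]
  obtain ⟨C, hC⟩ := (isCompact_uIcc (a := a) (b := c)).exists_bound_of_continuousOn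
    hg.continuousOn
  have hC0 : 0 ≤ C := le_trans (norm_nonneg _) (hC a left_mem_uIcc)
  apply Measure.integrableOn_of_bounded (M := C * 2) measure_Ioc_lt_top.ne
    (hg.measurable.mul hf).aestronglyMeasurable
  refine (ae_restrict_iff' measurableSet_uIoc).mpr (ae_of_all _ fun s hs => ?_)
  have h1 : |g s| ≤ C := by simpa [Real.norm_eq_abs] using hC s (uIoc_subset_uIcc hs)
  have h2 : |f s| ≤ 2 := hbd s
  rw [Real.norm_eq_abs, Pi.mul_apply, abs_mul]
  exact mul_le_mul h1 h2 (abs_nonneg _) hC0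

/-- Representation of `gDeriv` separating the `x` and `s` variables. -/
lemma gDeriv_repr (b : ℝ) (f : ℝ → ℝ) (hf : Measurable f) (hbd : ∀ s, |f s| ≤ 2) (x : ℝ) :
    gDeriv b f x = Real.exp (b * x) * x * (∫ s in (0:ℝ)..x, Real.exp ((1 - b) * s) * f s)
      - Real.exp (b * x) * (∫ s in (0:ℝ)..x, (s * Real.exp ((1 - b) * s)) * f s) := by
  have key : ∀ s : ℝ, (x - s) * Real.exp (b * (x - s)) * Real.exp s * f s
      = Real.exp (b * x) * x * (Real.exp ((1 - b) * s) * f s)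
        - Real.exp (b * x) * ((s * Real.exp ((1 - b) * s)) * f s) := by
    intro s
    have h : Real.exp (b * (x - s)) * Real.exp s
        = Real.exp (b * x) * Real.exp ((1 - b) * s) := by
      rw [← Real.exp_add, ← Real.exp_add]; ring_nf
    calc (x - s) * Real.exp (b * (x - s)) * Real.exp s * f s
        = (x - s) * (Real.exp (b * (x - s)) * Real.exp s) * f s := by ring
      _ = (x - s) * (Real.exp (b * x) * Real.exp ((1 - b) * s)) * f s := by rw [h]
      _ = _ := by ring
  have ii1 : IntervalIntegrable (fun s => Real.exp ((1 - b) * s) * f s) volume 0 x :=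
    contMul_intervalIntegrable (by continuity) hf hbd 0 x
  have ii2 : IntervalIntegrable (fun s => (s * Real.exp ((1 - b) * s)) * f s) volume 0 x :=
    contMul_intervalIntegrable (by continuity) hf hbd 0 x
  rw [gDeriv]
  rw [show (fun s => (x - s) * Real.exp (b * (x - s)) * Real.exp s * f s)
      = fun s => Real.exp (b * x) * x * (Real.exp ((1 - b) * s) * f s)
        - Real.exp (b * x) * ((s * Real.exp ((1 - b) * s)) * f s) from funext key]
  rw [intervalIntegral.integral_sub (ii1.const_mul _) (ii2.const_mul _),
    intervalIntegral.integral_const_mul, intervalIntegral.integral_const_mul]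

/-- `gDeriv b f` is continuous when `f` is measurable and bounded. -/
lemma gDeriv_continuous (b : ℝ) (f : ℝ → ℝ) (hf : Measurable f) (hbd : ∀ s, |f s| ≤ 2) :
    Continuous (gDeriv b f) := by
  have hrepr := gDeriv_repr b f hf hbd
  rw [show gDeriv b f = fun x =>
      Real.exp (b * x) * x * (∫ s in (0:ℝ)..x, Real.exp ((1 - b) * s) * f s)
      - Real.exp (b * x) * (∫ s in (0:ℝ)..x, (s * Real.exp ((1 - b) * s)) * f s) from
    funext hrepr]
  have hP : Continuous fun x => ∫ s in (0:ℝ)..x, Real.exp ((1 - b) * s) * f s :=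
    intervalIntegral.continuous_primitive
      (fun a c => contMul_intervalIntegrable (by continuity) hf hbd a c) 0
  have hQ : Continuous fun x => ∫ s in (0:ℝ)..x, (s * Real.exp ((1 - b) * s)) * f s :=
    intervalIntegral.continuous_primitive
      (fun a c => contMul_intervalIntegrable (by continuity) hf hbd a c) 0
  fun_prop

/-- Pointwise lower bound for `gDeriv` for globally bounded `f`. -/
lemma gDeriv_lower (b : ℝ) (hb : 0 ≤ b) (f : ℝ → ℝ) (hf : Measurable f)
    (h1 : ∀ s, 1 ≤ f s) (h2 : ∀ s, f s ≤ 2) (x : ℝ) (hx : x ∈ Set.Icc (0:ℝ) 1) :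
    x ^ 2 / 2 ≤ gDeriv b f x := by
  have hbd : ∀ s, |f s| ≤ 2 := fun s => abs_le.mpr ⟨by linarith [h1 s], h2 s⟩
  have hlow : (∫ s in (0:ℝ)..x, (x - s)) = x ^ 2 / 2 := by
    rw [intervalIntegral.integral_sub intervalIntegrable_const
      (Continuous.intervalIntegrable (by continuity) 0 x),
      intervalIntegral.integral_const, integral_id]
    simp [smul_eq_mul]; ring
  have iiup : IntervalIntegrable
      (fun s => (x - s) * Real.exp (b * (x - s)) * Real.exp s * f s) volume 0 x := by
    have := contMul_intervalIntegrable
      (g := fun s => (x - s) * Real.exp (b * (x - s)) * Real.exp s) (by continuity) hf hbd 0 x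
    simpa using this
  have hmono := intervalIntegral.integral_mono_on (f := fun s : ℝ => x - s) hx.1
    ((show Continuous fun s : ℝ => x - s by continuity).intervalIntegrable 0 x) iiup
    (fun s hs => by
      show x - s ≤ (x - s) * Real.exp (b * (x - s)) * Real.exp s * f s
      have hxs : 0 ≤ x - s := by linarith [hs.2]
      have he1 : 1 ≤ Real.exp (b * (x - s)) := Real.one_le_exp (by positivity)
      have he2 : 1 ≤ Real.exp s := Real.one_le_exp hs.1
      have p1 : 0 ≤ (x - s) * Real.exp (b * (x - s)) := by positivity
      have p2 : 0 ≤ (x - s) * Real.exp (b * (x - s)) * Real.exp s := by positivity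
      calc x - s ≤ (x - s) * Real.exp (b * (x - s)) := le_mul_of_one_le_right hxs he1
        _ ≤ (x - s) * Real.exp (b * (x - s)) * Real.exp s := le_mul_of_one_le_right p1 he2
        _ ≤ _ := le_mul_of_one_le_right p2 (h1 s))
  rw [hlow] at hmono
  exact hmono

/-- Sensitivity condition of Assumption 3(c) for the SemiPDE model of Example 3 with
`C_θ = 1/(2√5)`: `g(x; β, f) ≥ x²/2`, hence
`‖∂_β u(·; β, f)‖_{L²} ≥ ‖g(·; β, f)‖_{L²} ≥ 1/(2√5) > 0`, where
`∂_β u(x; β, f) = (g(x; β, f), 2 g(x; 2β, f))`. -/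
theorem sensitivity_condition (β : ℝ) (hβ : β ∈ Set.Icc (0:ℝ) 2)
    (f : ℝ → ℝ) (hfm : Measurable f)
    (hfr : ∀ s ∈ Set.Icc (0:ℝ) 1, f s ∈ Set.Icc (1:ℝ) 2) :
    (∀ x ∈ Set.Icc (0:ℝ) 1, gDeriv β f x ≥ x ^ 2 / 2) ∧
    L2v (fun x => (gDeriv β f x, 2 * gDeriv (2 * β) f x)) ≥ L2 (gDeriv β f) ∧
    L2 (gDeriv β f) ≥ 1 / (2 * Real.sqrt 5) ∧
    (0 : ℝ) < 1 / (2 * Real.sqrt 5) := by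
  classical
  set F : ℝ → ℝ := fun s => max 1 (min (f s) 2) with hF
  have hFm : Measurable F := measurable_const.max (hfm.min measurable_const)
  have hF1 : ∀ s, 1 ≤ F s := fun s => le_max_left _ _
  have hF2 : ∀ s, F s ≤ 2 := fun s => max_le (by norm_num) (min_le_right _ _)
  have hFbd : ∀ s, |F s| ≤ 2 := fun s => abs_le.mpr ⟨by linarith [hF1 s], hF2 s⟩
  -- on [0,1], F agrees with f, hence gDeriv agrees
  have hFf : ∀ s ∈ Set.Icc (0:ℝ) 1, F s = f s := by
    intro s hs
    have h := hfr s hs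
    simp [hF, min_eq_left h.2, max_eq_right h.1]
  have heq : ∀ b : ℝ, ∀ x ∈ Set.Icc (0:ℝ) 1, gDeriv b f x = gDeriv b F x := by
    intro b x hx
    apply intervalIntegral.integral_congr
    intro s hs
    rw [Set.uIcc_of_le hx.1] at hs
    have : F s = f s := hFf s ⟨hs.1, hs.2.trans hx.2⟩
    simp [this]
  have hpt : ∀ x ∈ Set.Icc (0:ℝ) 1, gDeriv β f x ≥ x ^ 2 / 2 := by
    intro x hx
    rw [heq β x hx]
    exact gDeriv_lower β hβ.1 F hFm hF1 hF2 x hx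
  have hcont1 : Continuous (gDeriv β F) := gDeriv_continuous β F hFm hFbd
  have hcont2 : Continuous (gDeriv (2 * β) F) := gDeriv_continuous (2 * β) F hFm hFbd
  -- rewrite the L2 integrals in terms of F
  have hI1 : (∫ x in (0:ℝ)..1, (gDeriv β f x) ^ 2)
      = ∫ x in (0:ℝ)..1, (gDeriv β F x) ^ 2 := by
    apply intervalIntegral.integral_congr
    intro x hx
    rw [Set.uIcc_of_le (by norm_num : (0:ℝ) ≤ 1)] at hx
    show gDeriv β f x ^ 2 = gDeriv β F x ^ 2
    rw [heq β x hx]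
  have hI2 : (∫ x in (0:ℝ)..1, (gDeriv β f x) ^ 2 + (2 * gDeriv (2 * β) f x) ^ 2)
      = ∫ x in (0:ℝ)..1, (gDeriv β F x) ^ 2 + (2 * gDeriv (2 * β) F x) ^ 2 := by
    apply intervalIntegral.integral_congr
    intro x hx
    rw [Set.uIcc_of_le (by norm_num : (0:ℝ) ≤ 1)] at hx
    show gDeriv β f x ^ 2 + (2 * gDeriv (2 * β) f x) ^ 2
      = gDeriv β F x ^ 2 + (2 * gDeriv (2 * β) F x) ^ 2
    rw [heq β x hx, heq (2 * β) x hx]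
  -- the quantitative lower bound on the squared L2 norm
  have hquart : (∫ x in (0:ℝ)..1, (x ^ 2 / 2) ^ 2) = 1 / 20 := by
    have : ∀ x : ℝ, (x ^ 2 / 2) ^ 2 = x ^ 4 / 4 := by intro x; ring
    simp_rw [this]
    rw [intervalIntegral.integral_div, integral_pow]
    norm_num
  have hsq : (1:ℝ) / 20 ≤ ∫ x in (0:ℝ)..1, (gDeriv β F x) ^ 2 := by
    rw [← hquart]
    apply intervalIntegral.integral_mono_on (by norm_num)
      ((((continuous_pow 2).div_const 2).pow 2).intervalIntegrable 0 1)
      ((hcont1.pow 2).intervalIntegrable 0 1)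
    intro x hx
    have h1 := gDeriv_lower β hβ.1 F hFm hF1 hF2 x hx
    have h0 : 0 ≤ x ^ 2 / 2 := by positivity
    show (x ^ 2 / 2) ^ 2 ≤ gDeriv β F x ^ 2
    nlinarith
  have hL2 : L2 (gDeriv β f) ≥ 1 / (2 * Real.sqrt 5) := by
    rw [L2, hI1]
    have hval : (1:ℝ) / (2 * Real.sqrt 5) = Real.sqrt (1 / 20) := by
      rw [show (1:ℝ)/20 = (1 / (2 * Real.sqrt 5)) ^ 2 by
        rw [div_pow, mul_pow, Real.sq_sqrt (by norm_num : (0:ℝ) ≤ 5)]; norm_num]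
      rw [Real.sqrt_sq (by positivity)]
    rw [hval]
    exact Real.sqrt_le_sqrt hsq
  refine ⟨hpt, ?_, hL2, by positivity⟩
  -- L2v ≥ L2
  rw [L2, L2v, hI1]
  simp only
  rw [hI2]
  apply Real.sqrt_le_sqrt
  apply intervalIntegral.integral_mono_on (by norm_num)
    ((hcont1.pow 2).intervalIntegrable 0 1)
    (((hcont1.pow 2).add ((continuous_const.mul hcont2).pow 2)).intervalIntegrable 0 1)
  intro x _
  show gDeriv β F x ^ 2 ≤ gDeriv β F x ^ 2 + (2 * gDeriv (2 * β) F x) ^ 2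
  nlinarith [sq_nonneg (2 * gDeriv (2 * β) F x)]
end
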